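/- arXiv:1704.02374 — 4 statements merged into one kernel-verified Lean document; each statement's English description precedes it below -/
import Mathlib

section
/- Let (S_n) be a simple symmetric ±1 random walk started at 0. Then for every x ∈ [0,1], (1/n) log P(S_k ≥ x k for all k = 0, ..., n) → −β(x) as n → ∞, where β(x) = (1/2)((1+x)log(1+x) + (1-x)log(1-x)). -/
open MeasureTheory ProbabilityTheory Filter

noncomputable def brwBeta (x : ℝ) : ℝ :=
  (1 / 2) * ((1 + x) * Real.log (1 + x) + (1 - x) * Real.log (1 - x))

namespace SSRWAux

noncomputable def sgn (b : Bool) : ℝ := if b then 1 else -1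

def extend {n : ℕ} (s : Fin n → Bool) (i : ℕ) : Bool := if h : i < n then s ⟨i, h⟩ else false

noncomputable def psum {n : ℕ} (s : Fin n → Bool) (k : ℕ) : ℝ :=
  ∑ i ∈ Finset.range k, sgn (extend s i)

def tc {n : ℕ} (s : Fin n → Bool) : ℕ :=
  (Finset.univ.filter (fun i => s i = true)).card

open scoped Classical in
noncomputable def goodSet (n : ℕ) (x : ℝ) : Finset (Fin n → Bool) :=
  Finset.univ.filter (fun s => ∀ k ≤ n, x * k ≤ psum s k)

lemma mem_goodSet {n : ℕ} {x : ℝ} {s : Fin n → Bool} :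
    s ∈ goodSet n x ↔ ∀ k ≤ n, x * k ≤ psum s k := by
  classical
  simp [goodSet]

lemma tc_le {n : ℕ} (s : Fin n → Bool) : tc s ≤ n := by
  calc tc s ≤ (Finset.univ : Finset (Fin n)).card := Finset.card_filter_le _ _
    _ = n := Finset.card_univ.trans (Fintype.card_fin n)

lemma sgn_le_one (b : Bool) : sgn b ≤ 1 := by cases b <;> simp [sgn]

lemma psum_total {n : ℕ} (s : Fin n → Bool) : psum s n = 2 * tc s - n := by
  have h1 : psum s n = ∑ i : Fin n, sgn (s i) := by
    rw [psum, ← Fin.sum_univ_eq_sum_range (fun i => sgn (extend s i)) n]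
    refine Finset.sum_congr rfl fun i _ => ?_
    simp [extend, i.isLt]
  rw [h1]
  have h2 : ∀ i : Fin n, sgn (s i) = if s i = true then (1:ℝ) else -1 := by
    intro i; simp [sgn]
  simp only [h2]
  rw [Finset.sum_ite, Finset.sum_const, Finset.sum_const]
  have h3 : (Finset.univ.filter (fun i : Fin n => ¬ s i = true)).card = n - tc s := by
    have := Finset.card_filter_add_card_filter_not
      (s := (Finset.univ : Finset (Fin n))) (p := fun i => s i = true)
    simp only [Finset.card_univ, Fintype.card_fin] at this
    have htc := tc_le s
    unfold tc at htc ⊢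
    omega
  rw [h3]
  unfold tc
  have htc := tc_le s
  unfold tc at htc
  simp only [nsmul_eq_mul, mul_one, mul_neg_one, Nat.cast_sub htc]
  ring

lemma psum_le {n : ℕ} (s : Fin n → Bool) (k : ℕ) : psum s k ≤ k := by
  calc psum s k ≤ ∑ _i ∈ Finset.range k, (1:ℝ) :=
        Finset.sum_le_sum fun i _ => sgn_le_one _
    _ = k := by simp

lemma goodSet_one (n : ℕ) : goodSet n 1 = {fun _ => true} := by
  classical
  ext s
  rw [mem_goodSet, Finset.mem_singleton]
  constructor
  · intro h
    funext i
    by_contra hfalse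
    have hib : s i = false := by simpa using hfalse
    have h1 : psum s (i.val + 1) = psum s i.val + sgn (extend s i.val) := by
      rw [psum, psum, Finset.sum_range_succ]
    have h2 : extend s i.val = s i := by simp [extend, i.isLt]
    have h3 := h (i.val + 1) i.isLt
    have h4 := psum_le s i.val
    rw [h1, h2, hib] at h3
    simp only [sgn] at h3
    push_cast at h3
    norm_num at h3
    linarith
  · intro h k hk
    subst h
    have : psum (fun _ : Fin n => true) k = k := by
      rw [psum]
      have : ∀ i ∈ Finset.range k, sgn (extend (fun _ : Fin n => true) i) = 1 := by
        intro i hi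
        have : i < n := lt_of_lt_of_le (Finset.mem_range.mp hi) hk
        simp [extend, this, sgn]
      rw [Finset.sum_congr rfl this]
      simp
    rw [this, one_mul]

/-- The weighted binomial term, as a natural number: `C(n,k) p^k (n-p)^(n-k)`. -/
def bterm (n p k : ℕ) : ℕ := n.choose k * p ^ k * (n - p) ^ (n - k)

lemma bterm_le_succ {n p k : ℕ} (hk : k < p) (hkn : k < n) :
    bterm n p k ≤ bterm n p (k + 1) := by
  have h1 : n - k = (n - (k+1)) + 1 := by omega
  have key : n.choose k * (n - p) ≤ n.choose (k+1) * p := by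
    have h2 : n.choose (k+1) * (k+1) = n.choose k * (n - k) := Nat.choose_succ_right_eq n k
    have h3 : (n - p) * (k+1) ≤ (n - k) * p := by
      exact Nat.mul_le_mul (by omega) (by omega)
    have : n.choose k * (n - p) * (k+1) ≤ n.choose (k+1) * p * (k+1) := by
      calc n.choose k * (n - p) * (k+1) = n.choose k * ((n - p) * (k+1)) := by ring
        _ ≤ n.choose k * ((n - k) * p) := Nat.mul_le_mul_left _ h3
        _ = n.choose k * (n - k) * p := by ring
        _ = n.choose (k+1) * (k+1) * p := by rw [h2]
        _ = n.choose (k+1) * p * (k+1) := by ring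
    exact Nat.le_of_mul_le_mul_right this (Nat.succ_pos k)
  calc bterm n p k = (n.choose k * (n - p)) * (p ^ k * (n - p) ^ (n - (k+1))) := by
        unfold bterm; rw [h1]; ring
    _ ≤ (n.choose (k+1) * p) * (p ^ k * (n - p) ^ (n - (k+1))) := Nat.mul_le_mul_right _ key
    _ = bterm n p (k+1) := by unfold bterm; ring

lemma succ_le_bterm {n p k : ℕ} (hk : p ≤ k) : bterm n p (k + 1) ≤ bterm n p k := by
  by_cases hkn : k < n
  · have h1 : n - k = (n - (k+1)) + 1 := by omega
    have key : n.choose (k+1) * p ≤ n.choose k * (n - p) := by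
      have h2 : n.choose (k+1) * (k+1) = n.choose k * (n - k) := Nat.choose_succ_right_eq n k
      have h3 : (n - k) * p ≤ (n - p) * (k+1) := Nat.mul_le_mul (by omega) (by omega)
      have : n.choose (k+1) * p * (k+1) ≤ n.choose k * (n - p) * (k+1) := by
        calc n.choose (k+1) * p * (k+1) = n.choose (k+1) * (k+1) * p := by ring
          _ = n.choose k * (n - k) * p := by rw [h2]
          _ = n.choose k * ((n - k) * p) := by ring
          _ ≤ n.choose k * ((n - p) * (k+1)) := Nat.mul_le_mul_left _ h3
          _ = n.choose k * (n - p) * (k+1) := by ring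
      exact Nat.le_of_mul_le_mul_right this (Nat.succ_pos k)
    calc bterm n p (k+1) = (n.choose (k+1) * p) * (p ^ k * (n - p) ^ (n - (k+1))) := by
          unfold bterm; push_cast; ring
      _ ≤ (n.choose k * (n - p)) * (p ^ k * (n - p) ^ (n - (k+1))) := Nat.mul_le_mul_right _ key
      _ = bterm n p k := by unfold bterm; rw [h1]; ring
  · have : n.choose (k+1) = 0 := Nat.choose_eq_zero_of_lt (by omega)
    simp [bterm, this]

lemma bterm_le_max (n p k : ℕ) (hp : p ≤ n) : bterm n p k ≤ bterm n p p := by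
  rcases le_or_gt k p with h | h
  · have main : ∀ d k, k + d = p → bterm n p k ≤ bterm n p p := by
      intro d
      induction d with
      | zero => intro k hk; rw [(by omega : k = p)]
      | succ d ih =>
        intro k hk
        calc bterm n p k ≤ bterm n p (k+1) := bterm_le_succ (by omega) (by omega)
          _ ≤ bterm n p p := ih (k+1) (by omega)
    exact main (p - k) k (by omega)
  · have main : ∀ d, bterm n p (p + d) ≤ bterm n p p := by
      intro d
      induction d with
      | zero => simp
      | succ d ih =>
        calc bterm n p (p + (d+1)) = bterm n p ((p + d) + 1) := by rw [Nat.add_assoc]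
          _ ≤ bterm n p (p + d) := succ_le_bterm (by omega)
          _ ≤ bterm n p p := ih
    have := main (k - p); rw [(by omega : p + (k - p) = k)] at this; exact this

/-- Entropy lower bound for binomial coefficients, in natural numbers. -/
lemma nat_entropy (n p : ℕ) (hp : p ≤ n) :
    n ^ n ≤ (n + 1) * (n.choose p * p ^ p * (n - p) ^ (n - p)) := by
  have hbin : n ^ n = ∑ k ∈ Finset.range (n + 1), bterm n p k := by
    have h := add_pow p (n - p) n
    rw [(by omega : p + (n - p) = n)] at h
    rw [h]
    refine Finset.sum_congr rfl fun k _ => ?_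
    unfold bterm; push_cast; ring
  rw [hbin]
  have := Finset.sum_le_card_nsmul (Finset.range (n+1)) (bterm n p) (bterm n p p)
    (fun k _ => bterm_le_max n p k hp)
  refine this.trans ?_
  simp [bterm, Finset.card_range, smul_eq_mul, Nat.mul_assoc]

lemma card_tc_eq (n p : ℕ) :
    (Finset.univ.filter (fun s : Fin n → Bool => tc s = p)).card = n.choose p := by
  have hpc := Finset.card_powersetCard p (Finset.univ : Finset (Fin n))
  rw [Finset.card_univ, Fintype.card_fin] at hpc
  rw [← hpc]
  refine Finset.card_bij' (fun s _ => Finset.univ.filter (fun i => s i = true))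
    (fun t _ => fun i => decide (i ∈ t)) ?_ ?_ ?_ ?_
  · intro s hs
    rw [Finset.mem_powersetCard]
    exact ⟨Finset.filter_subset _ _, (Finset.mem_filter.mp hs).2⟩
  · intro t ht
    rw [Finset.mem_filter]
    refine ⟨Finset.mem_univ _, ?_⟩
    have : Finset.univ.filter (fun i => decide (i ∈ t) = true) = t := by
      ext i; simp
    rw [tc, this]
    exact (Finset.mem_powersetCard.mp ht).2
  · intro s hs
    funext i
    by_cases h : s i = true <;> simp [h]
  · intro t ht
    ext i; simp

lemma cycle_count {n : ℕ} (hn : 0 < n) {x : ℝ} {p : ℕ}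
    (hpx : x * n ≤ 2 * p - n) :
    n.choose p ≤ n * (goodSet n x).card := by
  classical
  haveI : NeZero n := ⟨hn.ne'⟩
  have hn0 : (n : ℝ) ≠ 0 := Nat.cast_ne_zero.mpr hn.ne'
  have hnpos : (0:ℝ) < n := Nat.cast_pos.mpr hn
  set D := Finset.univ.filter (fun s : Fin n → Bool => tc s = p) with hD
  have key : ∀ s : Fin n → Bool, ∃ j : Fin n, tc s = p →
      (fun i => s (i + j)) ∈ goodSet n x := by
    intro s
    set a : ℕ → ℝ := fun t => sgn (s ⟨t % n, Nat.mod_lt t hn⟩) with ha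
    set A : ℕ → ℝ := fun t => ∑ i ∈ Finset.range t, a i with hA
    have hps : ∀ k, k ≤ n → psum s k = A k := by
      intro k hk
      refine Finset.sum_congr rfl fun i hi => ?_
      have hin : i < n := lt_of_lt_of_le (Finset.mem_range.mp hi) hk
      simp [extend, hin, ha, Nat.mod_eq_of_lt hin]
    have hper : ∀ t, a (t + n) = a t := by
      intro t; simp only [ha, Nat.add_mod_right]
    set m : ℝ := A n with hm
    have hAsucc : ∀ t, A (t + 1) = A t + a t := fun t => Finset.sum_range_succ a t
    have hAper : ∀ t, A (t + n) = A t + m := by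
      intro t
      induction t with
      | zero => simp [hA, hm]
      | succ t ih =>
        have e1 : t + 1 + n = (t + n) + 1 := by omega
        rw [e1, hAsucc, ih, hper, hAsucc]; ring
    obtain ⟨j0, hj0mem, hj0min⟩ := Finset.exists_min_image (Finset.range n)
      (fun t => A t - m / n * t) ⟨0, Finset.mem_range.mpr hn⟩
    have hj0n : j0 < n := Finset.mem_range.mp hj0mem
    refine ⟨⟨j0, hj0n⟩, ?_⟩
    intro htc
    have hmx : x * n ≤ m := by
      have h1 : m = 2 * p - n := by
        rw [hm, ← hps n le_rfl, psum_total, htc]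
      rw [h1]; exact hpx
    have hFext : ∀ k, k ≤ n →
        A j0 - m / n * j0 ≤ A (j0 + k) - m / n * ((j0 + k : ℕ) : ℝ) := by
      intro k hk
      by_cases hlt : j0 + k < n
      · exact hj0min _ (Finset.mem_range.mpr hlt)
      · have hu : j0 + k - n < n := by omega
        have hue : (j0 + k - n) + n = j0 + k := by omega
        have hA1 := hAper (j0 + k - n)
        rw [hue] at hA1
        have h5 : ((j0 + k - n : ℕ) : ℝ) = (j0:ℝ) + k - n := by
          push_cast [Nat.cast_sub (show n ≤ j0 + k by omega)]; ring
        have h7 := hj0min _ (Finset.mem_range.mpr hu)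
        have e6 : m / n * (((j0:ℝ) + k)) = m / n * ((j0 + k - n : ℕ):ℝ) + m := by
          rw [h5]; field_simp; ring
        push_cast
        rw [hA1, e6]
        simp only [h5] at h7 ⊢
        push_cast at h7
        linarith
    rw [mem_goodSet]
    intro k hk
    have hrot : psum (fun i => s (i + ⟨j0, hj0n⟩)) k = A (j0 + k) - A j0 := by
      have hterm : ∀ i ∈ Finset.range k,
          sgn (extend (fun i => s (i + ⟨j0, hj0n⟩)) i) = a (j0 + i) := by
        intro i hi
        have hin : i < n := lt_of_lt_of_le (Finset.mem_range.mp hi) hk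
        have hfin : (⟨i, hin⟩ + ⟨j0, hj0n⟩ : Fin n) = ⟨(j0 + i) % n, Nat.mod_lt _ hn⟩ := by
          apply Fin.ext
          simp [Fin.add_def, Nat.add_comm]
        simp only [extend, hin, dif_pos, ha]
        rw [hfin]
      rw [psum, Finset.sum_congr rfl hterm]
      have h8 : ∑ i ∈ Finset.range k, a (j0 + i) = ∑ i ∈ Finset.Ico j0 (j0 + k), a i := by
        rw [Finset.sum_Ico_eq_sum_range]
        simp
      rw [h8, Finset.sum_Ico_eq_sub a (Nat.le_add_right j0 k)]
    rw [hrot]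
    have h9 := hFext k hk
    have hxc : x ≤ m / n := (le_div_iff₀ hnpos).mpr (by linarith [hmx])
    have h10 : x * k ≤ m / n * k :=
      mul_le_mul_of_nonneg_right hxc (Nat.cast_nonneg k)
    push_cast at h9
    linarith
  choose j hj using key
  have hcard : D.card = n.choose p := card_tc_eq n p
  set Φ : (Fin n → Bool) → (Fin n → Bool) := fun s => fun i => s (i + j s) with hPhi
  have himg : D.image Φ ⊆ goodSet n x := by
    intro t ht
    obtain ⟨s, hs, rfl⟩ := Finset.mem_image.mp ht
    exact hj s ((Finset.mem_filter.mp hs).2)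
  have hfiber : ∀ t ∈ D.image Φ, (D.filter (fun s => Φ s = t)).card ≤ n := by
    intro t _
    have hsub : D.filter (fun s => Φ s = t) ⊆
        Finset.univ.image (fun jv : Fin n => fun i => t (i - jv)) := by
      intro s hs
      obtain ⟨-, hst⟩ := Finset.mem_filter.mp hs
      refine Finset.mem_image.mpr ⟨j s, Finset.mem_univ _, ?_⟩
      funext i
      have h11 : t (i - j s) = s ((i - j s) + j s) := by rw [← hst]
      rw [h11, sub_add_cancel]
    calc (D.filter (fun s => Φ s = t)).card
        ≤ (Finset.univ.image (fun jv : Fin n => fun i => t (i - jv))).card :=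
          Finset.card_le_card hsub
      _ ≤ (Finset.univ : Finset (Fin n)).card := Finset.card_image_le
      _ = n := by simp
  have hmain := Finset.card_le_mul_card_image (f := Φ) D n hfiber
  calc n.choose p = D.card := hcard.symm
    _ ≤ n * (D.image Φ).card := hmain
    _ ≤ n * (goodSet n x).card := Nat.mul_le_mul_left _ (Finset.card_le_card himg)

lemma card_filter_not_tc {n : ℕ} (s : Fin n → Bool) :
    (Finset.univ.filter (fun i => ¬ s i = true)).card = n - tc s := by
  have := Finset.card_filter_add_card_filter_not
    (s := (Finset.univ : Finset (Fin n))) (p := fun i => s i = true)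
  simp only [Finset.card_univ, Fintype.card_fin] at this
  have htc := tc_le s
  unfold tc at htc ⊢
  omega

lemma chernoff (n : ℕ) {x q : ℝ} (hq : q = (1 + x) / 2) (hx0 : 0 ≤ x) (hx1 : x < 1) :
    ((goodSet n x).card : ℝ) *
      Real.exp (n * (q * Real.log q + (1 - q) * Real.log (1 - q))) ≤ 1 := by
  classical
  have hq0 : 0 < q := by rw [hq]; linarith
  have hq1 : 0 < 1 - q := by rw [hq]; linarith
  have hqq : 1 - q ≤ q := by rw [hq]; linarith
  have hlog : Real.log (1 - q) ≤ Real.log q := Real.log_le_log hq1 hqq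
  have hprod : ∀ s : Fin n → Bool,
      (∏ i : Fin n, (if s i = true then q else 1 - q)) = q ^ tc s * (1 - q) ^ (n - tc s) := by
    intro s
    rw [Finset.prod_ite, Finset.prod_const, Finset.prod_const, card_filter_not_tc]
    rfl
  have hsum1 : ∑ s : Fin n → Bool, q ^ tc s * (1 - q) ^ (n - tc s) = 1 := by
    have h := Finset.prod_univ_sum (fun _ : Fin n => (Finset.univ : Finset Bool))
      (fun _ b => if b = true then q else 1 - q)
    rw [Fintype.piFinset_univ] at h
    have h2 : ∀ i : Fin n, (∑ b : Bool, if b = true then q else 1 - q) = 1 := by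
      intro i; rw [Fintype.sum_bool]; simp
    rw [Finset.prod_congr rfl (fun i _ => h2 i), Finset.prod_const_one] at h
    rw [← Finset.sum_congr rfl (fun s _ => hprod s), ← h]
  have hterm : ∀ s ∈ goodSet n x,
      Real.exp (n * (q * Real.log q + (1 - q) * Real.log (1 - q)))
        ≤ q ^ tc s * (1 - q) ^ (n - tc s) := by
    intro s hs
    have htcq : (n : ℝ) * q ≤ tc s := by
      have h1 := (mem_goodSet.mp hs) n le_rfl
      rw [psum_total] at h1
      rw [hq]
      linarith
    have htn : (tc s : ℝ) ≤ n := by exact_mod_cast tc_le s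
    have hcast : ((n - tc s : ℕ) : ℝ) = (n : ℝ) - tc s := by
      exact_mod_cast Nat.cast_sub (tc_le s)
    have hrw : q ^ tc s * (1 - q) ^ (n - tc s)
        = Real.exp ((tc s : ℝ) * Real.log q + ((n : ℝ) - tc s) * Real.log (1 - q)) := by
      rw [Real.exp_add, ← hcast, ← Real.log_pow, ← Real.log_pow,
        Real.exp_log (by positivity), Real.exp_log (by positivity)]
    rw [hrw]
    apply Real.exp_le_exp.mpr
    have hfac : 0 ≤ ((tc s : ℝ) - n * q) * (Real.log q - Real.log (1 - q)) :=
      mul_nonneg (by linarith) (by linarith)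
    nlinarith [hfac]
  calc ((goodSet n x).card : ℝ) * Real.exp (n * (q * Real.log q + (1 - q) * Real.log (1 - q)))
      = ∑ _s ∈ goodSet n x, Real.exp (n * (q * Real.log q + (1 - q) * Real.log (1 - q))) := by
        rw [Finset.sum_const, nsmul_eq_mul]
    _ ≤ ∑ s ∈ goodSet n x, q ^ tc s * (1 - q) ^ (n - tc s) := Finset.sum_le_sum hterm
    _ ≤ ∑ s : Fin n → Bool, q ^ tc s * (1 - q) ^ (n - tc s) :=
        Finset.sum_le_sum_of_subset_of_nonneg (Finset.subset_univ _)
          (fun s _ _ => by positivity)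
    _ = 1 := hsum1

lemma sgn_pm (b : Bool) : sgn b = 1 ∨ sgn b = -1 := by cases b <;> simp [sgn]

lemma measure_eq {Ω : Type*} [MeasurableSpace Ω] (μ : Measure Ω) [IsProbabilityMeasure μ]
    (X : ℕ → Ω → ℝ) (hmeas : ∀ i, Measurable (X i))
    (hindep : iIndepFun X μ)
    (hdist : ∀ i, Measure.map (X i) μ =
      (2 : ENNReal)⁻¹ • (Measure.dirac (1 : ℝ) + Measure.dirac (-1 : ℝ)))
    (x : ℝ) (n : ℕ) :
    μ {ω | ∀ k ≤ n, x * k ≤ ∑ i ∈ Finset.range k, X i ω}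
      = ((goodSet n x).card : ENNReal) * (2 : ENNReal)⁻¹ ^ n := by
  classical
  have hXB : ∀ (i : ℕ) (B : Set ℝ), MeasurableSet B →
      μ (X i ⁻¹' B) = ((2 : ENNReal)⁻¹ • (Measure.dirac (1 : ℝ) + Measure.dirac (-1 : ℝ))) B := by
    intro i B hB
    rw [← hdist i, Measure.map_apply (hmeas i) hB]
  have hsingle : ∀ (i : ℕ) (b : Bool), μ (X i ⁻¹' {sgn b}) = 2⁻¹ := by
    intro i b
    rw [hXB i _ (measurableSet_singleton _)]
    rcases sgn_pm b with h | h <;> rw [h] <;>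
      simp [Measure.dirac_apply' _ (measurableSet_singleton _), Set.indicator,
        Measure.add_apply]
    · norm_num
    · norm_num
  -- the set where X i takes values in {1, -1}
  have hpm : ∀ i : ℕ, μ {ω | ¬ (X i ω = 1 ∨ X i ω = -1)} = 0 := by
    intro i
    have hBmeas : MeasurableSet ({1, -1} : Set ℝ) := (Set.finite_singleton _).insert _ |>.measurableSet
    have h1 : μ (X i ⁻¹' {1, -1}) = 1 := by
      rw [hXB i _ hBmeas]
      rw [Measure.smul_apply, Measure.add_apply,
        Measure.dirac_apply' _ hBmeas, Measure.dirac_apply' _ hBmeas]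
      simp [Set.indicator]
      norm_num
      rw [ENNReal.inv_mul_cancel] <;> norm_num
    have hcompl : {ω | ¬ (X i ω = 1 ∨ X i ω = -1)} = (X i ⁻¹' {1, -1})ᶜ := by
      ext ω; simp [Set.mem_preimage]
    rw [hcompl, measure_compl ((hmeas i) hBmeas) (measure_ne_top μ _), h1]
    simp
  set C : Set Ω := ⋂ i ∈ Finset.range n, {ω | X i ω = 1 ∨ X i ω = -1} with hC
  have hCnull : μ Cᶜ = 0 := by
    rw [hC, Set.compl_iInter₂]
    refine measure_biUnion_null_iff (Finset.countable_toSet _) |>.mpr ?_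
    intro i _
    rw [Set.compl_setOf]
    exact hpm i
  set A : (Fin n → Bool) → Set Ω :=
    fun s => ⋂ i ∈ Finset.range n, X i ⁻¹' {sgn (extend s i)} with hA
  have hAmeas : ∀ s, MeasurableSet (A s) :=
    fun s => MeasurableSet.biInter (Finset.countable_toSet _)
      (fun i _ => (hmeas i) (measurableSet_singleton _))
  have hAmu : ∀ s, μ (A s) = (2 : ENNReal)⁻¹ ^ n := by
    intro s
    rw [hA]
    rw [hindep.measure_inter_preimage_eq_mul (Finset.range n)
      (sets := fun i => {sgn (extend s i)}) (fun i _ => measurableSet_singleton _)]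
    rw [Finset.prod_congr rfl (fun i _ => hsingle i (extend s i))]
    rw [Finset.prod_const, Finset.card_range]
  -- decomposition
  have hdecomp : {ω | ∀ k ≤ n, x * k ≤ ∑ i ∈ Finset.range k, X i ω} ∩ C
      = ⋃ s ∈ goodSet n x, A s := by
    ext ω
    simp only [Set.mem_inter_iff, Set.mem_setOf_eq, Set.mem_iUnion, hC, hA,
      Set.mem_iInter, Set.mem_preimage, Set.mem_singleton_iff, Finset.mem_range]
    constructor
    · rintro ⟨hcond, hval⟩
      set s : Fin n → Bool := fun i => if X i.val ω = 1 then true else false with hs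
      have hXs : ∀ i, i < n → X i ω = sgn (extend s i) := by
        intro i hi
        have he : extend s i = s ⟨i, hi⟩ := by simp [extend, hi]
        rw [he]
        simp only [hs]
        rcases hval i hi with h1 | h1
        · rw [if_pos h1]; simpa [sgn] using h1
        · have hne : ¬ X i ω = 1 := by rw [h1]; norm_num
          rw [if_neg hne]; simp [sgn, h1]
      refine ⟨s, ?_, hXs⟩
      rw [mem_goodSet]
      intro k hk
      have : psum s k = ∑ i ∈ Finset.range k, X i ω := by
        refine Finset.sum_congr rfl fun i hi => ?_
        exact (hXs i (lt_of_lt_of_le (Finset.mem_range.mp hi) hk)).symm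
      rw [this]
      exact hcond k hk
    · rintro ⟨s, hsgood, hXs⟩
      constructor
      · intro k hk
        have : ∑ i ∈ Finset.range k, X i ω = psum s k := by
          refine Finset.sum_congr rfl fun i hi => ?_
          exact hXs i (lt_of_lt_of_le (Finset.mem_range.mp hi) hk)
        rw [this]
        exact (mem_goodSet.mp hsgood) k hk
      · intro i hi
        rw [hXs i hi]
        exact sgn_pm _
  have hdisj : (↑(goodSet n x) : Set (Fin n → Bool)).PairwiseDisjoint A := by
    intro s _ t _ hst
    have : ∃ i : Fin n, s i ≠ t i := by
      by_contra h
      push_neg at h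
      exact hst (funext h)
    obtain ⟨i, hi⟩ := this
    refine Set.disjoint_left.mpr fun ω hws hwt => ?_
    have h1 : X i.val ω = sgn (extend s i.val) := by
      have := Set.mem_iInter.mp hws i.val
      have := Set.mem_iInter.mp this (Finset.mem_range.mpr i.isLt)
      exact this
    have h2 : X i.val ω = sgn (extend t i.val) := by
      have := Set.mem_iInter.mp hwt i.val
      have := Set.mem_iInter.mp this (Finset.mem_range.mpr i.isLt)
      exact this
    have he : ∀ u : Fin n → Bool, extend u i.val = u i := by
      intro u; simp [extend, i.isLt]
    rw [he] at h1
    rw [he] at h2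
    have h3 : sgn (s i) = sgn (t i) := by rw [← h1, h2]
    have hinj : ∀ b c : Bool, sgn b = sgn c → b = c := by
      intro b c
      cases b <;> cases c <;> simp [sgn] <;> norm_num
    exact hi (hinj _ _ h3)
  calc μ {ω | ∀ k ≤ n, x * k ≤ ∑ i ∈ Finset.range k, X i ω}
      = μ ({ω | ∀ k ≤ n, x * k ≤ ∑ i ∈ Finset.range k, X i ω} ∩ C) :=
        (measure_inter_conull hCnull).symm
    _ = μ (⋃ s ∈ goodSet n x, A s) := by rw [hdecomp]
    _ = ∑ s ∈ goodSet n x, μ (A s) := measure_biUnion_finset hdisj (fun s _ => hAmeas s)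
    _ = ∑ _s ∈ goodSet n x, (2 : ENNReal)⁻¹ ^ n := Finset.sum_congr rfl (fun s _ => hAmu s)
    _ = ((goodSet n x).card : ENNReal) * (2 : ENNReal)⁻¹ ^ n := by
        rw [Finset.sum_const, nsmul_eq_mul]

lemma alltrue_mem {n : ℕ} {x : ℝ} (hx1 : x ≤ 1) : (fun _ => true) ∈ goodSet n x := by
  rw [mem_goodSet]
  intro k hk
  have hpk : psum (fun _ : Fin n => true) k = k := by
    rw [psum]
    have h : ∀ i ∈ Finset.range k, sgn (extend (fun _ : Fin n => true) i) = 1 := by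
      intro i hi
      have : i < n := lt_of_lt_of_le (Finset.mem_range.mp hi) hk
      simp [extend, this, sgn]
    rw [Finset.sum_congr rfl h]
    simp
  rw [hpk]
  have h2 := mul_le_mul_of_nonneg_right hx1 (Nat.cast_nonneg (α := ℝ) k)
  simpa using h2

noncomputable def Hf (t : ℝ) : ℝ := -(t * Real.log t + (1 - t) * Real.log (1 - t))

lemma phi_eq {x q : ℝ} (hq : q = (1 + x) / 2) (hx0 : 0 ≤ x) (hx1 : x < 1) :
    q * Real.log q + (1 - q) * Real.log (1 - q) = brwBeta x - Real.log 2 := by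
  have h1 : (0:ℝ) < 1 + x := by linarith
  have h2 : (0:ℝ) < 1 - x := by linarith
  rw [hq, brwBeta]
  rw [(by ring : (1:ℝ) - (1 + x)/2 = (1 - x)/2)]
  rw [Real.log_div h1.ne' two_ne_zero, Real.log_div h2.ne' two_ne_zero]
  ring

lemma goodSet_card_pos {n : ℕ} {x : ℝ} (hx1 : x ≤ 1) : 0 < (goodSet n x).card :=
  Finset.card_pos.mpr ⟨_, alltrue_mem hx1⟩

lemma upper_step {n : ℕ} {x q : ℝ} (hq : q = (1 + x) / 2) (hx0 : 0 ≤ x) (hx1 : x < 1)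
    (hn1 : 1 ≤ n) :
    (n : ℝ)⁻¹ * Real.log (((goodSet n x).card : ℝ) * ((2:ℝ)⁻¹) ^ n) ≤ -brwBeta x := by
  have hnpos : (0:ℝ) < n := by exact_mod_cast hn1
  have hcpos : (0:ℝ) < ((goodSet n x).card : ℝ) := by
    exact_mod_cast goodSet_card_pos (le_of_lt hx1)
  have h1 := chernoff n hq hx0 hx1
  have h2 : Real.log (((goodSet n x).card : ℝ) *
      Real.exp (n * (q * Real.log q + (1 - q) * Real.log (1 - q)))) ≤ Real.log 1 :=
    Real.log_le_log (by positivity) h1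
  rw [Real.log_mul hcpos.ne' (Real.exp_ne_zero _), Real.log_exp, Real.log_one] at h2
  rw [Real.log_mul hcpos.ne' (by positivity), Real.log_pow, Real.log_inv]
  rw [inv_mul_le_iff₀ hnpos]
  have h3 := phi_eq hq hx0 hx1
  nlinarith [h2, h3]

lemma lower_step {n : ℕ} {x q : ℝ} (hq : q = (1 + x) / 2) (hx0 : 0 ≤ x) (hx1 : x < 1)
    (hn1 : 1 ≤ n) (hn2 : 1 ≤ (1 - q) * n) :
    Hf ((⌈(n:ℝ) * q⌉₊ : ℝ) / n) - (Real.log n + Real.log (n + 1)) / n - Real.log 2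
      ≤ (n : ℝ)⁻¹ * Real.log (((goodSet n x).card : ℝ) * ((2:ℝ)⁻¹) ^ n) := by
  classical
  set p : ℕ := ⌈(n:ℝ) * q⌉₊ with hp
  set c : ℕ := (goodSet n x).card with hcdef
  have hnpos : (0:ℝ) < n := by exact_mod_cast hn1
  have hq0 : 0 < q := by rw [hq]; linarith
  have hq1 : q < 1 := by rw [hq]; linarith
  have ha : (n:ℝ) * q ≤ p := Nat.le_ceil _
  have hb : (p:ℝ) < n * q + 1 := Nat.ceil_lt_add_one (by positivity)
  have hpltn : p < n := by
    have : (p:ℝ) < n := by nlinarith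
    exact_mod_cast this
  have hppos : 0 < p := by
    have : (0:ℝ) < p := lt_of_lt_of_le (by positivity) ha
    exact_mod_cast this
  have hnp : 0 < n - p := by omega
  have hd : x * n ≤ 2 * p - n := by
    have : x * n = 2 * ((n:ℝ) * q) - n := by rw [hq]; ring
    linarith
  have hcyc := cycle_count (by omega : 0 < n) hd
  have hent := nat_entropy n p hpltn.le
  have hc1 : 0 < c := goodSet_card_pos (le_of_lt hx1)
  have hcombo : n ^ n ≤ (n + 1) * (n * c * p ^ p * (n - p) ^ (n - p)) := by
    calc n ^ n ≤ (n + 1) * (n.choose p * p ^ p * (n - p) ^ (n - p)) := hent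
      _ ≤ (n + 1) * (n * c * p ^ p * (n - p) ^ (n - p)) := by
          apply Nat.mul_le_mul_left
          exact Nat.mul_le_mul_right _ (Nat.mul_le_mul_right _ hcyc)
  have hR : ((n:ℝ)) ^ n ≤ ((n:ℝ) + 1) * ((n:ℝ) * c * (p:ℝ) ^ p * ((n - p : ℕ):ℝ) ^ (n - p)) := by
    exact_mod_cast hcombo
  have hcRpos : (0:ℝ) < (c:ℝ) := by exact_mod_cast hc1
  have hpRpos : (0:ℝ) < (p:ℝ) := by exact_mod_cast hppos
  have hnpRpos : (0:ℝ) < ((n - p : ℕ):ℝ) := by exact_mod_cast hnp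
  have hL := Real.log_le_log (by positivity) hR
  rw [Real.log_pow, Real.log_mul (by positivity) (by positivity),
    Real.log_mul (by positivity) (by positivity),
    Real.log_mul (by positivity) (by positivity),
    Real.log_mul (by positivity) (by positivity),
    Real.log_pow, Real.log_pow] at hL
  -- hL : n log n ≤ log (n+1) + (log n + log c + p log p + (n-p) log (n-p))
  have hHf : Hf ((p:ℝ) / n) * n
      = (n:ℝ) * Real.log n - (p:ℝ) * Real.log p - ((n - p : ℕ):ℝ) * Real.log ((n - p : ℕ):ℝ) := by
    have e1 : (1 : ℝ) - (p:ℝ)/n = ((n - p : ℕ):ℝ)/n := by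
      rw [Nat.cast_sub hpltn.le]; field_simp
    rw [Hf, e1, Real.log_div hpRpos.ne' hnpos.ne', Real.log_div hnpRpos.ne' hnpos.ne']
    have e2 : ((n - p : ℕ):ℝ) = (n:ℝ) - (p:ℝ) := Nat.cast_sub hpltn.le
    rw [e2]
    field_simp
    ring
  rw [Real.log_mul hcRpos.ne' (by positivity), Real.log_pow, Real.log_inv]
  rw [le_inv_mul_iff₀ hnpos]
  have expand : (n:ℝ) * (Hf ((p:ℝ)/n) - (Real.log n + Real.log (n + 1)) / n - Real.log 2)
      = Hf ((p:ℝ)/n) * n - (Real.log n + Real.log (n + 1)) - n * Real.log 2 := by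
    field_simp
  rw [expand, hHf]
  linarith

lemma tendsto_log_div_nat : Tendsto (fun n : ℕ => Real.log n / n) atTop (nhds 0) :=
  Real.isLittleO_log_id_atTop.tendsto_div_nhds_zero.comp tendsto_natCast_atTop_atTop

lemma tendsto_log_succ_div_nat :
    Tendsto (fun n : ℕ => Real.log (n + 1) / n) atTop (nhds 0) := by
  have h2 : Tendsto (fun n : ℕ => 2 * (Real.log n / n)) atTop (nhds 0) := by
    simpa using tendsto_log_div_nat.const_mul 2
  refine tendsto_of_tendsto_of_tendsto_of_le_of_le' tendsto_const_nhds h2 ?_ ?_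
  · filter_upwards [eventually_ge_atTop 1] with n hn
    have hn1 : (1:ℝ) ≤ n := by exact_mod_cast hn
    have : (0:ℝ) ≤ Real.log (n + 1) := Real.log_nonneg (by linarith)
    positivity
  · filter_upwards [eventually_ge_atTop 2] with n hn
    have hn2 : (2:ℝ) ≤ n := by exact_mod_cast hn
    have hnpos : (0:ℝ) < n := by linarith
    have h3 : ((n:ℝ) + 1) ≤ (n:ℝ) ^ 2 := by nlinarith
    have h4 : Real.log ((n:ℝ) + 1) ≤ Real.log ((n:ℝ) ^ 2) :=
      Real.log_le_log (by positivity) h3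
    rw [Real.log_pow] at h4
    rw [div_le_iff₀ hnpos]
    have he : 2 * (Real.log n / n) * n = 2 * Real.log n := by field_simp
    rw [he]
    exact_mod_cast h4

lemma ceil_div_tendsto {q : ℝ} (hq0 : 0 < q) :
    Tendsto (fun n : ℕ => (⌈(n:ℝ) * q⌉₊ : ℝ) / n) atTop (nhds q) := by
  have hup : Tendsto (fun n : ℕ => q + ((n:ℝ))⁻¹) atTop (nhds q) := by
    simpa using (tendsto_const_nhds : Tendsto (fun _ : ℕ => q) atTop (nhds q)).add
      tendsto_inv_atTop_nhds_zero_nat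
  refine tendsto_of_tendsto_of_tendsto_of_le_of_le' tendsto_const_nhds hup ?_ ?_
  · filter_upwards [eventually_ge_atTop 1] with n hn
    have hnpos : (0:ℝ) < n := by exact_mod_cast hn
    rw [le_div_iff₀ hnpos]
    have h := Nat.le_ceil ((n:ℝ) * q)
    linarith
  · filter_upwards [eventually_ge_atTop 1] with n hn
    have hnpos : (0:ℝ) < n := by exact_mod_cast hn
    rw [div_le_iff₀ hnpos]
    have h := Nat.ceil_lt_add_one (by positivity : (0:ℝ) ≤ (n:ℝ) * q)
    have hinv : (q + (n:ℝ)⁻¹) * n = q * n + 1 := by field_simp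
    linarith

lemma Hf_continuousAt {q : ℝ} (hq0 : 0 < q) (hq1 : q < 1) : ContinuousAt Hf q := by
  have h1 : ContinuousAt (fun t : ℝ => t * Real.log t) q :=
    continuousAt_id.mul (Real.continuousAt_log hq0.ne')
  have hc : ContinuousAt (fun t : ℝ => 1 - t) q :=
    (continuous_const.sub continuous_id).continuousAt
  have hl : ContinuousAt Real.log (1 - q) := Real.continuousAt_log (by linarith)
  have h2 : ContinuousAt (fun t : ℝ => (1 - t) * Real.log (1 - t)) q := hc.mul (hl.comp hc)
  exact (h1.add h2).neg

lemma tendsto_L {x q : ℝ} (hq : q = (1 + x) / 2) (hx0 : 0 ≤ x) (hx1 : x < 1) :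
    Tendsto (fun n : ℕ =>
      Hf ((⌈(n:ℝ) * q⌉₊ : ℝ) / n) - (Real.log n + Real.log (n + 1)) / n - Real.log 2)
      atTop (nhds (-brwBeta x)) := by
  have hq0 : 0 < q := by rw [hq]; linarith
  have hq1 : q < 1 := by rw [hq]; linarith
  have hHf : Tendsto (fun n : ℕ => Hf ((⌈(n:ℝ) * q⌉₊ : ℝ) / n)) atTop (nhds (Hf q)) :=
    (Hf_continuousAt hq0 hq1).tendsto.comp (ceil_div_tendsto hq0)
  have hlogs : Tendsto (fun n : ℕ => (Real.log n + Real.log (n + 1)) / n) atTop (nhds 0) := by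
    have h := tendsto_log_div_nat.add tendsto_log_succ_div_nat
    simp only [add_zero] at h
    refine h.congr fun n => ?_
    rw [add_div]
  have hmain := (hHf.sub hlogs).sub
    (tendsto_const_nhds : Tendsto (fun _ : ℕ => Real.log 2) atTop (nhds (Real.log 2)))
  have hval : Hf q - 0 - Real.log 2 = -brwBeta x := by
    have hphi := phi_eq hq hx0 hx1
    rw [Hf, hphi]
    ring
  rwa [hval] at hmain
end SSRWAux

/-- For the simple symmetric ±1 random walk,
`(1/n) log P(S_k ≥ x k for all k = 0,…,n) → -β(x)` as `n → ∞`. -/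
theorem ssrw_stay_above_rate
    {Ω : Type*} [MeasurableSpace Ω] (μ : Measure Ω) [IsProbabilityMeasure μ]
    (X : ℕ → Ω → ℝ) (hmeas : ∀ i, Measurable (X i))
    (hindep : iIndepFun X μ)
    (hdist : ∀ i, Measure.map (X i) μ =
      (2 : ENNReal)⁻¹ • (Measure.dirac (1 : ℝ) + Measure.dirac (-1 : ℝ)))
    (x : ℝ) (hx : x ∈ Set.Icc (0 : ℝ) 1) :
    Tendsto (fun n : ℕ =>
        (n : ℝ)⁻¹ * Real.log
          ((μ {ω | ∀ k ≤ n, x * k ≤ ∑ i ∈ Finset.range k, X i ω}).toReal))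
      atTop (nhds (-brwBeta x)) := by
  obtain ⟨hx0, hx1⟩ := hx
  have hPn : ∀ n : ℕ, ((μ {ω | ∀ k ≤ n, x * k ≤ ∑ i ∈ Finset.range k, X i ω}).toReal)
      = ((SSRWAux.goodSet n x).card : ℝ) * ((2:ℝ)⁻¹) ^ n := by
    intro n
    rw [SSRWAux.measure_eq μ X hmeas hindep hdist x n]
    rw [ENNReal.toReal_mul, ENNReal.toReal_pow]
    simp
  simp only [hPn]
  rcases eq_or_lt_of_le hx1 with hx1' | hx1'
  · subst hx1'
    have hbeta : brwBeta 1 = Real.log 2 := by rw [brwBeta]; norm_num; ring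
    rw [hbeta]
    refine Tendsto.congr' ?_
      (tendsto_const_nhds : Tendsto (fun _ : ℕ => -Real.log 2) atTop (nhds (-Real.log 2)))
    filter_upwards [eventually_ge_atTop 1] with n hn
    have hnpos : (0:ℝ) < n := by exact_mod_cast hn
    rw [SSRWAux.goodSet_one n]
    simp only [Finset.card_singleton, Nat.cast_one, one_mul]
    rw [Real.log_pow, Real.log_inv]
    field_simp
  · set q : ℝ := (1 + x) / 2 with hq
    refine tendsto_of_tendsto_of_tendsto_of_le_of_le'
      (SSRWAux.tendsto_L hq hx0 hx1') tendsto_const_nhds ?_ ?_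
    · have h2 : Tendsto (fun n : ℕ => (1 - q) * n) atTop atTop :=
        Tendsto.const_mul_atTop (by rw [hq]; linarith) tendsto_natCast_atTop_atTop
      filter_upwards [h2.eventually_ge_atTop 1, eventually_ge_atTop 1] with n ha hb
      exact SSRWAux.lower_step hq hx0 hx1' hb ha
    · filter_upwards [eventually_ge_atTop 1] with n hn
      exact SSRWAux.upper_step hq hx0 hx1' hn
end

section
/- Let ν be the standard Gaussian measure, A ∈ 𝒜 nonempty, p ∈ (0,1). Define Ĩ^±(A,p) = inf{x ≥ 0 : ν(A ∓ x) ≥ p} and J̃(A,p) = inf{u ∈ [0,1) : p ≤ sup_{x∈ℝ} ν(A/√(1−u) − x)}. Then J̃(A,p) > 0 if and only if min{Ĩ⁺(A,p), Ĩ⁻(A,p)} = ∞. -/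
open MeasureTheory ProbabilityTheory Set Filter Topology
open scoped NNReal ENNReal

noncomputable def nu : Measure ℝ := gaussianReal 0 1

lemma nu_def : nu = gaussianReal 0 1 := rfl

instance : IsProbabilityMeasure nu := by rw [nu_def]; infer_instance

lemma gaussianPDF_le_one (x : ℝ) : gaussianPDF 0 1 x ≤ 1 := by
  rw [gaussianPDF]
  refine ENNReal.ofReal_le_one.mpr ?_
  rw [gaussianPDFReal]
  have h1 : (1:ℝ) ≤ Real.sqrt (2 * Real.pi * (1:ℝ≥0)) := by
    rw [show ((1:ℝ≥0):ℝ) = 1 by norm_num, mul_one]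
    nlinarith [Real.sq_sqrt (by positivity : (0:ℝ) ≤ 2*Real.pi), Real.pi_gt_three,
      Real.sqrt_nonneg (2*Real.pi)]
  have h2 : Real.exp (-(x - 0)^2 / (2*(1:ℝ≥0))) ≤ 1 := by
    rw [Real.exp_le_one_iff]
    have : (0:ℝ) ≤ (x-0)^2 := sq_nonneg _
    have : ((1:ℝ≥0):ℝ) = 1 := by norm_num
    rw [this]
    nlinarith
  calc (Real.sqrt (2 * Real.pi * (1:ℝ≥0)))⁻¹ * Real.exp (-(x - 0)^2 / (2*(1:ℝ≥0)))
      ≤ 1 * 1 := by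
        apply mul_le_mul _ h2 (Real.exp_nonneg _) zero_le_one
        rw [inv_le_one_iff₀]; right; exact h1
    _ = 1 := by norm_num

lemma nu_le_length (a b : ℝ) {B : Set ℝ} (hB : B ⊆ Set.Ioc a b) :
    nu B ≤ ENNReal.ofReal (b - a) := by
  calc nu B ≤ nu (Set.Ioc a b) := measure_mono hB
    _ = ∫⁻ x in Set.Ioc a b, gaussianPDF 0 1 x := by
        rw [nu_def, gaussianReal_apply _ one_ne_zero]
    _ ≤ ∫⁻ _ in Set.Ioc a b, 1 := by
        exact setLIntegral_mono measurable_const (fun x _ => gaussianPDF_le_one x)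
    _ = volume (Set.Ioc a b) := by rw [setLIntegral_one]
    _ = ENNReal.ofReal (b - a) := Real.volume_Ioc

lemma tendsto_nu_univ {S : ℕ → Set ℝ} (hm : Monotone S) (hU : (⋃ n, S n) = Set.univ) :
    Tendsto (fun n => (nu (S n)).toReal) atTop (𝓝 1) := by
  have h := tendsto_measure_iUnion_atTop (μ := nu) hm
  rw [hU, measure_univ] at h
  have := (ENNReal.tendsto_toReal ENNReal.one_ne_top).comp h
  exact this

lemma exists_ge_Ioi (t p : ℝ) (hp : p < 1) : ∃ n : ℕ, p ≤ (nu (Set.Ioi (t - n))).toReal := by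
  have hm : Monotone (fun n : ℕ => Set.Ioi (t - n)) := fun m n hmn =>
    Set.Ioi_subset_Ioi (by have h : (m:ℝ) ≤ n := by exact_mod_cast hmn
                           linarith)
  have hU : (⋃ n : ℕ, Set.Ioi (t - n)) = Set.univ := by
    ext y; simp only [Set.mem_iUnion, Set.mem_Ioi, Set.mem_univ, iff_true]
    obtain ⟨n, hn⟩ := exists_nat_gt (t - y)
    exact ⟨n, by linarith⟩
  exact ((tendsto_nu_univ hm hU).eventually (eventually_ge_nhds hp)).exists

lemma exists_ge_Iic (t p : ℝ) (hp : p < 1) : ∃ n : ℕ, p ≤ (nu (Set.Iic (t + n))).toReal := by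
  have hm : Monotone (fun n : ℕ => Set.Iic (t + n)) := fun m n hmn =>
    Set.Iic_subset_Iic.mpr (by have h : (m:ℝ) ≤ n := by exact_mod_cast hmn
                               linarith)
  have hU : (⋃ n : ℕ, Set.Iic (t + n)) = Set.univ := by
    ext y; simp only [Set.mem_iUnion, Set.mem_Iic, Set.mem_univ, iff_true]
    obtain ⟨n, hn⟩ := exists_nat_gt (y - t)
    exact ⟨n, by linarith⟩
  exact ((tendsto_nu_univ hm hU).eventually (eventually_ge_nhds hp)).exists

lemma exists_ge_Ioc (p : ℝ) (hp : p < 1) : ∃ n : ℕ, p ≤ (nu (Set.Ioc (-(n:ℝ)) n)).toReal := by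
  have hm : Monotone (fun n : ℕ => Set.Ioc (-(n:ℝ)) n) := fun m n hmn => by
    have : (m:ℝ) ≤ n := by exact_mod_cast hmn
    exact Set.Ioc_subset_Ioc (by linarith) this
  have hU : (⋃ n : ℕ, Set.Ioc (-(n:ℝ)) n) = Set.univ := by
    ext y; simp only [Set.mem_iUnion, Set.mem_Ioc, Set.mem_univ, iff_true]
    obtain ⟨n, hn⟩ := exists_nat_gt |y|
    exact ⟨n, by cases abs_lt.mp hn; constructor <;> linarith⟩
  exact ((tendsto_nu_univ hm hU).eventually (eventually_ge_nhds hp)).exists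

lemma nu_Iic_eq (t : ℝ) : (nu (Set.Iic t)).toReal = 1 - (nu (Set.Ioi t)).toReal := by
  rw [← Set.compl_Ioi, prob_compl_eq_one_sub measurableSet_Ioi,
    ENNReal.toReal_sub_of_le prob_le_one ENNReal.one_ne_top, ENNReal.toReal_one]

lemma nu_Ici_eq (t : ℝ) : (nu (Set.Ici t)).toReal = 1 - (nu (Set.Iio t)).toReal := by
  rw [← Set.compl_Iio, prob_compl_eq_one_sub measurableSet_Iio,
    ENNReal.toReal_sub_of_le prob_le_one ENNReal.one_ne_top, ENNReal.toReal_one]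

lemma exists_small_Iic (t ε : ℝ) (hε : 0 < ε) : ∃ n : ℕ, (nu (Set.Iic (t - n))).toReal ≤ ε := by
  obtain ⟨n, hn⟩ := exists_ge_Ioi t (1 - ε) (by linarith)
  exact ⟨n, by rw [nu_Iic_eq]; linarith⟩

lemma exists_small_Ici (t ε : ℝ) (hε : 0 < ε) : ∃ n : ℕ, (nu (Set.Ici (t + n))).toReal ≤ ε := by
  obtain ⟨n, hn⟩ := exists_ge_Iic t (1 - ε) (by linarith)
  refine ⟨n, ?_⟩
  rw [nu_Ici_eq]
  have hsub : Set.Iic (t + n) ⊆ Set.Iio (t + n) ∪ {t + n} := by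
    intro y hy
    rcases lt_or_eq_of_le (Set.mem_Iic.mp hy) with h | h
    · exact Or.inl h
    · exact Or.inr (by simp [h])
  have hsing : nu {t + (n:ℝ)} = 0 := by
    rw [nu_def]
    exact (gaussianReal_absolutelyContinuous 0 one_ne_zero) (measure_singleton _)
  have : nu (Set.Iic (t + n)) ≤ nu (Set.Iio (t + n)) := by
    calc nu (Set.Iic (t + n)) ≤ nu (Set.Iio (t + n) ∪ {t + (n:ℝ)}) := measure_mono hsub
      _ ≤ nu (Set.Iio (t + n)) + nu {t + (n:ℝ)} := measure_union_le _ _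
      _ = nu (Set.Iio (t + n)) := by rw [hsing, add_zero]
  have h2 : (nu (Set.Iic (t + n))).toReal ≤ (nu (Set.Iio (t + n))).toReal :=
    ENNReal.toReal_mono (measure_ne_top _ _) this
  linarith

lemma image_affine (c d a b : ℝ) (hc : 0 < c) :
    (fun t => t * c + d) '' Set.Ioc a b = Set.Ioc (a * c + d) (b * c + d) := by
  ext y
  simp only [Set.mem_image, Set.mem_Ioc]
  constructor
  · rintro ⟨t, ⟨h1, h2⟩, rfl⟩
    constructor <;> nlinarith
  · rintro ⟨h1, h2⟩
    refine ⟨(y - d) / c, ⟨?_, ?_⟩, by field_simp; ring⟩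
    · rw [lt_div_iff₀ hc]; linarith
    · rw [div_le_iff₀ hc]; linarith

lemma Ioc_subset_three (fa fb ga gb : ℝ) :
    Set.Ioc fa fb ⊆ Set.Ioc ga gb ∪ (Set.Ioc fa ga ∪ Set.Ioc gb fb) := by
  intro t ht
  simp only [Set.mem_Ioc] at ht
  rcases le_or_gt t ga with h | h
  · exact Or.inr (Or.inl ⟨ht.1, h⟩)
  · rcases le_or_gt t gb with h' | h'
    · exact Or.inl ⟨h, h'⟩
    · exact Or.inr (Or.inr ⟨h', ht.2⟩)

lemma nu_biUnion_le (s : Finset (Set ℝ)) (f g : Set ℝ → ℝ × ℝ) (ε : ℝ) (hε : 0 ≤ ε)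
    (h : ∀ I ∈ s, (g I).1 - (f I).1 ≤ ε ∧ (f I).2 - (g I).2 ≤ ε) :
    nu (⋃ I ∈ s, Set.Ioc (f I).1 (f I).2)
      ≤ nu (⋃ I ∈ s, Set.Ioc (g I).1 (g I).2) + ENNReal.ofReal (2 * s.card * ε) := by
  have hsub : (⋃ I ∈ s, Set.Ioc (f I).1 (f I).2) ⊆
      (⋃ I ∈ s, Set.Ioc (g I).1 (g I).2) ∪
      (⋃ I ∈ s, (Set.Ioc (f I).1 (g I).1 ∪ Set.Ioc (g I).2 (f I).2)) := by
    intro t ht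
    obtain ⟨I, hI, htI⟩ := Set.mem_iUnion₂.mp ht
    rcases Ioc_subset_three (f I).1 (f I).2 (g I).1 (g I).2 htI with h' | h'
    · exact Or.inl (Set.mem_iUnion₂.mpr ⟨I, hI, h'⟩)
    · exact Or.inr (Set.mem_iUnion₂.mpr ⟨I, hI, h'⟩)
  calc nu (⋃ I ∈ s, Set.Ioc (f I).1 (f I).2)
      ≤ nu ((⋃ I ∈ s, Set.Ioc (g I).1 (g I).2) ∪
          (⋃ I ∈ s, (Set.Ioc (f I).1 (g I).1 ∪ Set.Ioc (g I).2 (f I).2))) := measure_mono hsub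
    _ ≤ nu (⋃ I ∈ s, Set.Ioc (g I).1 (g I).2) +
          nu (⋃ I ∈ s, (Set.Ioc (f I).1 (g I).1 ∪ Set.Ioc (g I).2 (f I).2)) := measure_union_le _ _
    _ ≤ nu (⋃ I ∈ s, Set.Ioc (g I).1 (g I).2) + ENNReal.ofReal (2 * s.card * ε) := by
        gcongr
        calc nu (⋃ I ∈ s, (Set.Ioc (f I).1 (g I).1 ∪ Set.Ioc (g I).2 (f I).2))
            ≤ ∑ I ∈ s, nu (Set.Ioc (f I).1 (g I).1 ∪ Set.Ioc (g I).2 (f I).2) :=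
              measure_biUnion_finset_le _ _
          _ ≤ ∑ I ∈ s, (ENNReal.ofReal ε + ENNReal.ofReal ε) := by
              refine Finset.sum_le_sum fun I hI => ?_
              calc nu (Set.Ioc (f I).1 (g I).1 ∪ Set.Ioc (g I).2 (f I).2)
                  ≤ nu (Set.Ioc (f I).1 (g I).1) + nu (Set.Ioc (g I).2 (f I).2) :=
                    measure_union_le _ _
                _ ≤ ENNReal.ofReal ε + ENNReal.ofReal ε := by
                    gcongr
                    · exact le_trans (nu_le_length _ _ subset_rfl)
                        (ENNReal.ofReal_le_ofReal (h I hI).1)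
                    · exact le_trans (nu_le_length _ _ subset_rfl)
                        (ENNReal.ofReal_le_ofReal (h I hI).2)
          _ = ENNReal.ofReal (2 * s.card * ε) := by
              rw [Finset.sum_const, ← ENNReal.ofReal_add hε hε, nsmul_eq_mul,
                ← ENNReal.ofReal_natCast, ← ENNReal.ofReal_mul (Nat.cast_nonneg _)]
              congr 1; ring

lemma nu_toReal_mono {B C : Set ℝ} (h : B ⊆ C) : (nu B).toReal ≤ (nu C).toReal :=
  ENNReal.toReal_mono (measure_ne_top _ _) (measure_mono h)

lemma nu_toReal_le_one (B : Set ℝ) : (nu B).toReal ≤ 1 := by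
  have := ENNReal.toReal_mono ENNReal.one_ne_top (prob_le_one (μ := nu) (s := B))
  simpa using this

lemma nu_toReal_add_le {B C : Set ℝ} {δ : ℝ} (hδ : 0 ≤ δ)
    (h : nu B ≤ nu C + ENNReal.ofReal δ) : (nu B).toReal ≤ (nu C).toReal + δ := by
  have hfin : nu C + ENNReal.ofReal δ ≠ ⊤ :=
    ENNReal.add_ne_top.mpr ⟨measure_ne_top _ _, ENNReal.ofReal_ne_top⟩
  have := ENNReal.toReal_mono hfin h
  rwa [ENNReal.toReal_add (measure_ne_top _ _) ENNReal.ofReal_ne_top,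
    ENNReal.toReal_ofReal hδ] at this

lemma nu_T_le (s : Finset (Set ℝ)) (e : Set ℝ → ℝ × ℝ) (c₁ d₁ c₂ d₂ ε : ℝ) (hε : 0 ≤ ε)
    (h : ∀ I ∈ s, ((e I).1 * c₂ + d₂) - ((e I).1 * c₁ + d₁) ≤ ε ∧
      ((e I).2 * c₁ + d₁) - ((e I).2 * c₂ + d₂) ≤ ε) :
    nu (⋃ I ∈ s, Set.Ioc ((e I).1 * c₁ + d₁) ((e I).2 * c₁ + d₁))
      ≤ nu (⋃ I ∈ s, Set.Ioc ((e I).1 * c₂ + d₂) ((e I).2 * c₂ + d₂))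
        + ENNReal.ofReal (2 * s.card * ε) :=
  nu_biUnion_le s (fun I => ((e I).1 * c₁ + d₁, (e I).2 * c₁ + d₁))
    (fun I => ((e I).1 * c₂ + d₂, (e I).2 * c₂ + d₂)) ε hε h


/-- Membership in the algebra 𝒜 generated by half-lines `(-∞, x]`. -/
def IsHalfLineAlg (A : Set ℝ) : Prop :=
  ∃ s : Finset (Set ℝ),
    (∀ I ∈ s, (∃ a : ℝ, I = Set.Iic a) ∨ (∃ a b : ℝ, I = Set.Ioc a b) ∨
      (∃ a : ℝ, I = Set.Ioi a)) ∧ A = ⋃ I ∈ s, I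

set_option maxHeartbeats 2000000 in
/-- `J̃(A,p) > 0` if and only if `min{Ĩ⁺(A,p), Ĩ⁻(A,p)} = ∞`, i.e. both sets
`{x ≥ 0 : ν(A ∓ x) ≥ p}` are empty. -/
theorem Jtilde_pos_iff_I_infinite (A : Set ℝ) (hA : IsHalfLineAlg A) (hne : A.Nonempty)
    (p : ℝ) (hp : p ∈ Set.Ioo (0 : ℝ) 1) :
    0 < sInf {u : ℝ | u ∈ Set.Ico (0 : ℝ) 1 ∧
        p ≤ ⨆ x : ℝ, ((gaussianReal 0 1)
          ((fun a => a / Real.sqrt (1 - u) - x) '' A)).toReal} ↔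
      ({x : ℝ | 0 ≤ x ∧ p ≤ ((gaussianReal 0 1) ((fun a => a - x) '' A)).toReal} = ∅ ∧
       {x : ℝ | 0 ≤ x ∧ p ≤ ((gaussianReal 0 1) ((fun a => a + x) '' A)).toReal} = ∅) := by
  obtain ⟨hp0, hp1⟩ := hp
  obtain ⟨s, hs, hAeq⟩ := hA
  set J : Set ℝ := {u : ℝ | u ∈ Set.Ico (0 : ℝ) 1 ∧
      p ≤ ⨆ x : ℝ, ((gaussianReal 0 1)
        ((fun a => a / Real.sqrt (1 - u) - x) '' A)).toReal} with hJ
  have hbdda : ∀ u : ℝ, BddAbove (Set.range fun x : ℝ =>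
      ((gaussianReal 0 1) ((fun a => a / Real.sqrt (1 - u) - x) '' A)).toReal) :=
    fun u => ⟨1, by rintro _ ⟨x, rfl⟩; exact nu_toReal_le_one _⟩
  have hJlb : ∀ u ∈ J, (0:ℝ) ≤ u := fun u hu => hu.1.1
  have hsq0 : Real.sqrt (1 - 0) = 1 := by norm_num
  constructor
  · -- easy direction
    intro hpos
    constructor
    · rw [Set.eq_empty_iff_forall_notMem]
      rintro x ⟨hx0, hxp⟩
      have himg : (fun a : ℝ => a / Real.sqrt (1 - 0) - x) = (fun a : ℝ => a - x) := by
        funext a; rw [hsq0, div_one]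
      have h0J : (0:ℝ) ∈ J := by
        refine ⟨⟨le_refl 0, zero_lt_one⟩, ?_⟩
        calc p ≤ ((gaussianReal 0 1) ((fun a : ℝ => a / Real.sqrt (1 - 0) - x) '' A)).toReal := by
              rw [himg]; exact hxp
          _ ≤ _ := le_ciSup (hbdda 0) x
      have := csInf_le ⟨0, hJlb⟩ h0J
      linarith
    · rw [Set.eq_empty_iff_forall_notMem]
      rintro x ⟨hx0, hxp⟩
      have himg : (fun a : ℝ => a / Real.sqrt (1 - 0) - (-x)) = (fun a : ℝ => a + x) := by
        funext a; rw [hsq0, div_one, sub_neg_eq_add]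
      have h0J : (0:ℝ) ∈ J := by
        refine ⟨⟨le_refl 0, zero_lt_one⟩, ?_⟩
        calc p ≤ ((gaussianReal 0 1)
              ((fun a : ℝ => a / Real.sqrt (1 - 0) - (-x)) '' A)).toReal := by
              rw [himg]; exact hxp
          _ ≤ _ := le_ciSup (hbdda 0) (-x)
      have := csInf_le ⟨0, hJlb⟩ h0J
      linarith
  · -- hard direction
    rintro ⟨hPl, hMi⟩
    have hPl' : ∀ x : ℝ, 0 ≤ x → ((gaussianReal 0 1) ((fun a => a - x) '' A)).toReal < p := by
      intro x hx
      by_contra h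
      push_neg at h
      exact (Set.eq_empty_iff_forall_notMem.mp hPl x) ⟨hx, h⟩
    have hMi' : ∀ x : ℝ, 0 ≤ x → ((gaussianReal 0 1) ((fun a => a + x) '' A)).toReal < p := by
      intro x hx
      by_contra h
      push_neg at h
      exact (Set.eq_empty_iff_forall_notMem.mp hMi x) ⟨hx, h⟩
    have htrans : ∀ x : ℝ, ((gaussianReal 0 1) ((fun a => a - x) '' A)).toReal < p := by
      intro x
      rcases le_or_gt 0 x with hx | hx
      · exact hPl' x hx
      · have himg : (fun a : ℝ => a - x) = (fun a : ℝ => a + (-x)) := by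
          funext a; rw [sub_eq_add_neg]
        rw [himg]
        exact hMi' (-x) (by linarith)
    -- Step A : every interval in s is an Ioc
    have hIoc : ∀ I : Set ℝ, ∃ ab : ℝ × ℝ, I ∈ s → I = Set.Ioc ab.1 ab.2 := by
      intro I
      by_cases hI : I ∈ s
      · rcases hs I hI with ⟨a, rfl⟩ | ⟨a, b, h⟩ | ⟨a, rfl⟩
        · refine ⟨(0,0), fun _ => False.elim ?_⟩
          obtain ⟨n, hn⟩ := exists_ge_Iic a p hp1
          refine absurd (le_trans hn (nu_toReal_mono ?_)) (not_le.mpr (hMi' n (Nat.cast_nonneg n)))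
          intro z hz
          refine ⟨z - n, ?_, by ring⟩
          rw [hAeq]
          refine Set.mem_iUnion₂.mpr ⟨Set.Iic a, hI, ?_⟩
          simp only [Set.mem_Iic] at hz ⊢
          linarith
        · exact ⟨(a, b), fun _ => h⟩
        · refine ⟨(0,0), fun _ => False.elim ?_⟩
          obtain ⟨n, hn⟩ := exists_ge_Ioi a p hp1
          refine absurd (le_trans hn (nu_toReal_mono ?_)) (not_le.mpr (hPl' n (Nat.cast_nonneg n)))
          intro z hz
          refine ⟨z + n, ?_, by ring⟩
          rw [hAeq]
          refine Set.mem_iUnion₂.mpr ⟨Set.Ioi a, hI, ?_⟩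
          simp only [Set.mem_Ioi] at hz ⊢
          linarith
      · exact ⟨(0,0), fun h => absurd h hI⟩
    choose e he using hIoc
    -- s is nonempty
    obtain ⟨y₀, hy₀⟩ := hne
    obtain ⟨I₀, hI₀s, hyI₀⟩ := Set.mem_iUnion₂.mp (hAeq ▸ hy₀)
    have hcard : (1:ℝ) ≤ s.card := by
      have : 0 < s.card := Finset.card_pos.mpr ⟨I₀, hI₀s⟩
      exact_mod_cast this
    -- bound R
    obtain ⟨R, hRdef⟩ : ∃ R : ℝ, R = 1 + ∑ I ∈ s, (|(e I).1| + |(e I).2|) := ⟨_, rfl⟩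
    have hsum_nonneg : 0 ≤ ∑ I ∈ s, (|(e I).1| + |(e I).2|) :=
      Finset.sum_nonneg fun I _ => by positivity
    have hR1 : 1 ≤ R := by rw [hRdef]; linarith
    have hRb : ∀ I ∈ s, |(e I).1| ≤ R ∧ |(e I).2| ≤ R := by
      intro I hI
      have h1 := Finset.single_le_sum (f := fun I => |(e I).1| + |(e I).2|)
        (fun i _ => by positivity) hI
      rw [hRdef]
      exact ⟨by nlinarith [abs_nonneg (e I).2], by nlinarith [abs_nonneg (e I).1]⟩
    -- canonical biUnion form
    obtain ⟨T, hTdef⟩ : ∃ T : ℝ → ℝ → Set ℝ,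
        T = fun c d => ⋃ I ∈ s, Set.Ioc ((e I).1 * c + d) ((e I).2 * c + d) := ⟨_, rfl⟩
    have himage : ∀ c d : ℝ, 0 < c → (fun a => a * c + d) '' A = T c d := by
      intro c d hc
      rw [hAeq, Set.image_iUnion₂, hTdef]
      refine Set.iUnion₂_congr fun I hI => ?_
      conv_lhs => rw [he I hI]
      rw [image_affine _ _ _ _ hc]
    have hTle : ∀ c₁ d₁ c₂ d₂ ε : ℝ, 0 ≤ ε →
        (∀ I ∈ s, ((e I).1 * c₂ + d₂) - ((e I).1 * c₁ + d₁) ≤ ε ∧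
          ((e I).2 * c₁ + d₁) - ((e I).2 * c₂ + d₂) ≤ ε) →
        (gaussianReal 0 1) (T c₁ d₁) ≤ (gaussianReal 0 1) (T c₂ d₂)
          + ENNReal.ofReal (2 * s.card * ε) := by
      intro c₁ d₁ c₂ d₂ ε hε h
      simp only [hTdef]
      exact nu_T_le s e c₁ d₁ c₂ d₂ ε hε h
    obtain ⟨f, hfdef⟩ : ∃ f : ℝ → ℝ, f = fun x => ((gaussianReal 0 1) (T 1 (-x))).toReal :=
      ⟨_, rfl⟩
    have hfx : ∀ x : ℝ, f x = ((gaussianReal 0 1) (T 1 (-x))).toReal := fun x => by rw [hfdef]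
    have hfxnu : ∀ x : ℝ, f x = (nu (T 1 (-x))).toReal := hfx
    have hTf : ∀ x : ℝ, (fun a : ℝ => a - x) '' A = T 1 (-x) := by
      intro x
      have h1 : (fun a : ℝ => a - x) = (fun a : ℝ => a * 1 + (-x)) := by funext a; ring
      rw [h1, himage 1 (-x) one_pos]
    have hfp : ∀ x, f x < p := by
      intro x
      have := htrans x
      rwa [hTf x, ← hfx x] at this
    -- Lipschitz bound
    have hlip : ∀ x y : ℝ, f x ≤ f y + 2 * s.card * |x - y| := by
      intro x y
      have hb := hTle 1 (-x) 1 (-y) |x - y| (abs_nonneg _) ?_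
      · have h4 := nu_toReal_add_le (mul_nonneg (mul_nonneg zero_le_two (Nat.cast_nonneg _)) (abs_nonneg _)) hb
        rw [← hfxnu x, ← hfxnu y] at h4
        exact h4
      · intro I hI
        constructor
        · have h1 : ((e I).1 * 1 + (-y)) - ((e I).1 * 1 + (-x)) = x - y := by ring
          rw [h1]; exact le_abs_self _
        · have h1 : ((e I).2 * 1 + (-x)) - ((e I).2 * 1 + (-y)) = y - x := by ring
          rw [h1, abs_sub_comm]; exact le_abs_self _
    have hcont : Continuous f := by
      have hK : LipschitzWith ((2 * s.card : ℕ) : ℝ≥0) f := by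
        apply LipschitzWith.of_dist_le_mul
        intro x y
        have hcast : (((2 * s.card : ℕ) : ℝ≥0) : ℝ) = 2 * (s.card : ℝ) := by push_cast; ring
        rw [Real.dist_eq, Real.dist_eq, hcast, abs_sub_le_iff]
        have hxy := hlip x y
        have hyx := hlip y x
        rw [abs_sub_comm] at hyx
        constructor <;> linarith
      exact hK.continuous
    -- A bounded
    have hAsub : A ⊆ Set.Icc (-R) R := by
      rw [hAeq]
      intro y hy
      obtain ⟨I, hI, hyI⟩ := Set.mem_iUnion₂.mp hy
      rw [he I hI] at hyI
      obtain ⟨h1, h2⟩ := hyI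
      obtain ⟨hb1, hb2⟩ := hRb I hI
      obtain ⟨hb1', hb1''⟩ := abs_le.mp hb1
      obtain ⟨hb2', hb2''⟩ := abs_le.mp hb2
      exact ⟨by linarith, by linarith⟩
    -- decay
    obtain ⟨n₁, hn₁⟩ := exists_small_Iic R (p/2) (by linarith)
    obtain ⟨n₂, hn₂⟩ := exists_small_Ici (-R) (p/2) (by linarith)
    obtain ⟨Tm, hTmdef⟩ : ∃ Tm : ℝ, Tm = max (n₁ : ℝ) (n₂ : ℝ) := ⟨_, rfl⟩
    have hTm0 : 0 ≤ Tm := by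
      rw [hTmdef]; exact le_trans (Nat.cast_nonneg n₁) (le_max_left _ _)
    have hdecay : ∀ x : ℝ, Tm ≤ |x| → f x ≤ p / 2 := by
      intro x hx
      rw [hTmdef] at hx
      rw [hfx]
      rcases le_total 0 x with hx0 | hx0
      · rw [abs_of_nonneg hx0] at hx
        have hn1x : (n₁:ℝ) ≤ x := le_trans (le_max_left _ _) hx
        have hsub : T 1 (-x) ⊆ Set.Iic (R - n₁) := by
          rw [← hTf]
          rintro _ ⟨a, ha, rfl⟩
          have := (hAsub ha).2
          simp only [Set.mem_Iic]
          linarith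
        exact le_trans (nu_toReal_mono hsub) hn₁
      · rw [abs_of_nonpos hx0] at hx
        have hn2x : (n₂:ℝ) ≤ -x := le_trans (le_max_right _ _) hx
        have hsub : T 1 (-x) ⊆ Set.Ici (-R + n₂) := by
          rw [← hTf]
          rintro _ ⟨a, ha, rfl⟩
          have := (hAsub ha).1
          simp only [Set.mem_Ici]
          linarith
        exact le_trans (nu_toReal_mono hsub) hn₂
    -- compact max
    obtain ⟨x₀, hx₀mem, hx₀max⟩ := (isCompact_Icc (a := -Tm) (b := Tm)).exists_isMaxOn
      ⟨0, by constructor <;> linarith⟩ hcont.continuousOn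
    obtain ⟨M, hMdef⟩ : ∃ M : ℝ, M = max (f x₀) (p/2) := ⟨_, rfl⟩
    have hMp : M < p := by rw [hMdef]; exact max_lt (hfp x₀) (by linarith)
    have hM0 : 0 ≤ M := by rw [hMdef]; exact le_trans (by linarith) (le_max_right _ _)
    have hfM : ∀ x, f x ≤ M := by
      intro x
      rw [hMdef]
      rcases le_or_gt |x| Tm with h | h
      · obtain ⟨h1, h2⟩ := abs_le.mp h
        exact le_trans (hx₀max ⟨h1, h2⟩) (le_max_left _ _)
      · exact le_trans (hdecay x h.le) (le_max_right _ _)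
    -- choose u₀
    have hcard0 : (0:ℝ) < s.card := by linarith
    have hR0 : (0:ℝ) < R := by linarith
    have hD : (0:ℝ) < 2 * s.card * R + 1 := by
      have := mul_pos (mul_pos two_pos hcard0) hR0; linarith
    obtain ⟨ε₀, hε₀def⟩ : ∃ ε₀ : ℝ, ε₀ = (p - M) / (2 * s.card * R + 1) := ⟨_, rfl⟩
    have hε₀pos : 0 < ε₀ := by rw [hε₀def]; exact div_pos (by linarith) hD
    obtain ⟨u₀, hu₀def⟩ : ∃ u₀ : ℝ, u₀ = 1 - ((1 + ε₀)⁻¹)^2 := ⟨_, rfl⟩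
    have h1ε : 0 < 1 + ε₀ := by linarith
    have hinvlt : (1 + ε₀)⁻¹ < 1 := by
      rw [inv_lt_one_iff₀]; right; linarith
    have hinvpos : 0 < (1 + ε₀)⁻¹ := inv_pos.mpr h1ε
    have hu₀pos : 0 < u₀ := by rw [hu₀def]; nlinarith [hinvlt, hinvpos]
    -- lower bound on J
    have hlb : ∀ u ∈ J, u₀ ≤ u := by
      intro u hu
      by_contra hc
      push_neg at hc
      obtain ⟨⟨hu0, hu1⟩, hup⟩ := hu
      obtain ⟨sq, hsqd⟩ : ∃ sq : ℝ, sq = Real.sqrt (1 - u) := ⟨_, rfl⟩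
      rw [← hsqd] at hup
      have hsqpos : 0 < sq := by rw [hsqd]; exact Real.sqrt_pos.mpr (by linarith)
      have hsqle : sq ≤ 1 := by
        rw [hsqd]
        calc Real.sqrt (1 - u) ≤ Real.sqrt 1 := Real.sqrt_le_sqrt (by linarith)
          _ = 1 := Real.sqrt_one
      have hclb : 1 ≤ sq⁻¹ := (one_le_inv₀ hsqpos).mpr hsqle
      have hcub : sq⁻¹ < 1 + ε₀ := by
        have h1 : ((1 + ε₀)⁻¹)^2 < 1 - u := by rw [hu₀def] at hc; linarith
        have h2 : (1 + ε₀)⁻¹ < sq := by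
          rw [hsqd]
          exact (Real.lt_sqrt (by linarith)).mpr h1
        calc sq⁻¹ < ((1 + ε₀)⁻¹)⁻¹ := inv_strictAnti₀ hinvpos h2
          _ = 1 + ε₀ := inv_inv _
      obtain ⟨V, hVdef⟩ : ∃ V : ℝ, V = M + 2 * s.card * ((sq⁻¹ - 1) * R) := ⟨_, rfl⟩
      have hVp : V < p := by
        rw [hVdef]
        have h2 : 2 * (s.card:ℝ) * ((sq⁻¹ - 1) * R) ≤ 2 * s.card * R * ε₀ := by
          have e1 : 2 * (s.card:ℝ) * ((sq⁻¹ - 1) * R) = (2 * s.card * R) * (sq⁻¹ - 1) := by ring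
          have e2 : 2 * (s.card:ℝ) * R * ε₀ = (2 * s.card * R) * ε₀ := by ring
          rw [e1, e2]
          exact mul_le_mul_of_nonneg_left (by linarith) (by have := mul_pos (mul_pos two_pos hcard0) hR0; linarith)
        have h3 : 2 * (s.card:ℝ) * R * ε₀ < p - M := by
          have e3 : 2 * (s.card:ℝ) * R * ε₀
              = (2 * s.card * R) * (p - M) / (2 * s.card * R + 1) := by
            rw [hε₀def]; ring
          rw [e3, div_lt_iff₀ hD]
          nlinarith [hMp, hcard0, hR0]
        linarith
      have hle : ∀ x : ℝ, ((gaussianReal 0 1) ((fun a => a / sq - x) '' A)).toReal ≤ V := by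
        intro x
        have himg2 : (fun a : ℝ => a / sq - x) = (fun a : ℝ => a * sq⁻¹ + (-x)) := by
          funext a; rw [div_eq_mul_inv, sub_eq_add_neg]
        have hδ0 : (0:ℝ) ≤ (sq⁻¹ - 1) * R := mul_nonneg (by linarith) (by linarith)
        have hb := hTle sq⁻¹ (-x) 1 (-x) ((sq⁻¹ - 1) * R) hδ0 ?_
        · have hδ0' : (0:ℝ) ≤ 2 * s.card * ((sq⁻¹ - 1) * R) :=
            mul_nonneg (by linarith) hδ0
          have h4 := nu_toReal_add_le hδ0' hb
          rw [← hfxnu x] at h4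
          rw [himg2, himage sq⁻¹ (-x) (inv_pos.mpr hsqpos)]
          calc ((gaussianReal 0 1) (T sq⁻¹ (-x))).toReal
              = (nu (T sq⁻¹ (-x))).toReal := rfl
            _ ≤ f x + 2 * s.card * ((sq⁻¹ - 1) * R) := h4
            _ ≤ V := by rw [hVdef]; have := hfM x; linarith
        · intro I hI
          obtain ⟨hb1, hb2⟩ := hRb I hI
          obtain ⟨hb1', hb1''⟩ := abs_le.mp hb1
          obtain ⟨hb2', hb2''⟩ := abs_le.mp hb2
          constructor
          · calc ((e I).1 * 1 + (-x)) - ((e I).1 * sq⁻¹ + (-x))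
                = (-(e I).1) * (sq⁻¹ - 1) := by ring
              _ ≤ R * (sq⁻¹ - 1) := mul_le_mul_of_nonneg_right (by linarith) (by linarith)
              _ = (sq⁻¹ - 1) * R := by ring
          · calc ((e I).2 * sq⁻¹ + (-x)) - ((e I).2 * 1 + (-x))
                = (e I).2 * (sq⁻¹ - 1) := by ring
              _ ≤ R * (sq⁻¹ - 1) := mul_le_mul_of_nonneg_right (by linarith) (by linarith)
              _ = (sq⁻¹ - 1) * R := by ring
      have hsup : (⨆ x : ℝ, ((gaussianReal 0 1) ((fun a => a / sq - x) '' A)).toReal) ≤ V :=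
        ciSup_le hle
      have hVge : p ≤ V := le_trans hup hsup
      linarith
    -- J nonempty
    have hJne : J.Nonempty := by
      obtain ⟨n₀, hn₀⟩ := exists_ge_Ioc p hp1
      have hy' : y₀ ∈ Set.Ioc (e I₀).1 (e I₀).2 := (he I₀ hI₀s) ▸ hyI₀
      have hab : (e I₀).1 < (e I₀).2 := lt_of_lt_of_le hy'.1 hy'.2
      obtain ⟨l, hldef⟩ : ∃ l : ℝ, l = (e I₀).2 - (e I₀).1 := ⟨_, rfl⟩
      have hl : 0 < l := by rw [hldef]; linarith
      obtain ⟨c₁, hc₁def⟩ : ∃ c₁ : ℝ, c₁ = max 1 (2 * n₀ / l) := ⟨_, rfl⟩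
      have hc₁1 : 1 ≤ c₁ := by rw [hc₁def]; exact le_max_left _ _
      have hc₁0 : 0 < c₁ := by linarith
      have hc₁n : (n₀:ℝ) ≤ c₁ * l / 2 := by
        have h1 : 2 * n₀ / l ≤ c₁ := by rw [hc₁def]; exact le_max_right _ _
        rw [div_le_iff₀ hl] at h1
        linarith
      obtain ⟨u₁, hu₁def⟩ : ∃ u₁ : ℝ, u₁ = 1 - (c₁⁻¹)^2 := ⟨_, rfl⟩
      have hc₁inv : c₁⁻¹ ≤ 1 := by
        rw [inv_le_one_iff₀]; right; exact hc₁1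
      have hc₁invpos : 0 < c₁⁻¹ := inv_pos.mpr hc₁0
      have hu₁mem : u₁ ∈ Set.Ico (0:ℝ) 1 := by
        rw [hu₁def]
        constructor
        · nlinarith [hc₁inv, hc₁invpos]
        · nlinarith [hc₁invpos]
      have hsqu₁ : Real.sqrt (1 - u₁) = c₁⁻¹ := by
        rw [hu₁def, show (1:ℝ) - (1 - (c₁⁻¹)^2) = (c₁⁻¹)^2 by ring, Real.sqrt_sq hc₁invpos.le]
      obtain ⟨x₁, hx₁def⟩ : ∃ x₁ : ℝ, x₁ = ((e I₀).1 + (e I₀).2) / 2 * c₁ := ⟨_, rfl⟩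
      have hsubset : Set.Ioc (-(n₀:ℝ)) n₀ ⊆ (fun a => a / Real.sqrt (1 - u₁) - x₁) '' A := by
        have himg3 : (fun a : ℝ => a / Real.sqrt (1 - u₁) - x₁) =
            (fun a : ℝ => a * c₁ + (-x₁)) := by
          funext a; rw [hsqu₁, div_inv_eq_mul, sub_eq_add_neg]
        rw [himg3, himage c₁ (-x₁) hc₁0, hTdef]
        intro z hz
        refine Set.mem_iUnion₂.mpr ⟨I₀, hI₀s, ?_⟩
        obtain ⟨hz1, hz2⟩ := hz
        constructor
        · have he1 : (e I₀).1 * c₁ + (-x₁) = -(c₁ * l / 2) := by rw [hx₁def, hldef]; ring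
          rw [he1]; linarith
        · have he2 : (e I₀).2 * c₁ + (-x₁) = c₁ * l / 2 := by rw [hx₁def, hldef]; ring
          rw [he2]; linarith
      have hu₁J : u₁ ∈ J := by
        refine ⟨hu₁mem, ?_⟩
        calc p ≤ (nu (Set.Ioc (-(n₀:ℝ)) n₀)).toReal := hn₀
          _ ≤ ((gaussianReal 0 1) ((fun a => a / Real.sqrt (1 - u₁) - x₁) '' A)).toReal :=
            nu_toReal_mono hsubset
          _ ≤ _ := le_ciSup (hbdda u₁) x₁
      exact ⟨u₁, hu₁J⟩
    have hfin : u₀ ≤ sInf J := le_csInf hJne hlb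
    linarith
end

section
/- Let 𝕏 be a family of mean-zero real random variables such that sup_{X∈𝕏} E[e^{θ₀ X}] < ∞ for some θ₀ > 0 and sup_{X∈𝕏} E[(X⁻)²] < ∞. Then there exists C > 0 such that for all sufficiently small x > 0, all m ≥ 1 and all independent X_1, ..., X_m each distributed as some member of 𝕏, P((1/m)∑_{i=1}^m X_i > x) ≤ e^{−C x² m}. -/
open MeasureTheory ProbabilityTheory
lemma aux_exp_nonneg {t : ℝ} (ht : 0 ≤ t) : Real.exp t ≤ 1 + t + t ^ 2 * Real.exp t := by
  have h0 := Real.add_one_le_exp (-t)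
  have h2 : Real.exp t * (-t + 1) ≤ 1 := by
    have := mul_le_mul_of_nonneg_left h0 (Real.exp_pos t).le
    rwa [← Real.exp_add, add_neg_cancel, Real.exp_zero] at this
  nlinarith [Real.exp_pos t, mul_le_mul_of_nonneg_left h2 ht]
lemma aux_exp_nonpos {t : ℝ} (ht : t ≤ 0) : Real.exp t ≤ 1 + t + t ^ 2 := by
  have h0 := Real.add_one_le_exp (-t)
  have h2 : Real.exp t * (-t + 1) ≤ 1 := by
    have := mul_le_mul_of_nonneg_left h0 (Real.exp_pos t).le
    rwa [← Real.exp_add, add_neg_cancel, Real.exp_zero] at this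
  nlinarith [Real.exp_pos t, sq_nonneg t]
lemma aux_sq_le_exp {s : ℝ} (hs : 0 ≤ s) : s ^ 2 ≤ 4 * Real.exp s := by
  have h0 := Real.add_one_le_exp (s / 2)
  have h1 : Real.exp (s / 2) * Real.exp (s / 2) = Real.exp s := by
    rw [← Real.exp_add]; ring_nf
  nlinarith [Real.exp_pos (s / 2), sq_nonneg s]

lemma aux_pointwise {θ₀ θ : ℝ} (hθ₀ : 0 < θ₀) (hθ : 0 ≤ θ) (hθ' : θ ≤ θ₀ / 2) (y : ℝ) :
    Real.exp (θ * y) ≤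
      1 + θ * y + θ ^ 2 * (16 / θ₀ ^ 2 * Real.exp (θ₀ * y) + (max (-y) 0) ^ 2) := by
  rcases le_or_gt 0 y with hy | hy
  · have hmax : max (-y) 0 = 0 := max_eq_right (by linarith)
    have h1 : Real.exp (θ * y) ≤ 1 + θ * y + (θ * y) ^ 2 * Real.exp (θ * y) :=
      aux_exp_nonneg (mul_nonneg hθ hy)
    have h2 : Real.exp (θ * y) ≤ Real.exp (θ₀ / 2 * y) :=
      Real.exp_le_exp.2 (by nlinarith)
    have h3 : y ^ 2 ≤ 16 / θ₀ ^ 2 * Real.exp (θ₀ / 2 * y) := by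
      have h4 := aux_sq_le_exp (s := θ₀ / 2 * y) (by positivity)
      have h5 : (θ₀ / 2 * y) ^ 2 = θ₀ ^ 2 / 4 * y ^ 2 := by ring
      rw [h5] at h4
      rw [div_mul_eq_mul_div, le_div_iff₀ (by positivity)]
      nlinarith
    have h6 : Real.exp (θ₀ / 2 * y) * Real.exp (θ₀ / 2 * y) = Real.exp (θ₀ * y) := by
      rw [← Real.exp_add]; ring_nf
    have key : (θ * y) ^ 2 * Real.exp (θ * y) ≤
        θ ^ 2 * (16 / θ₀ ^ 2 * Real.exp (θ₀ * y)) := by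
      have : (θ * y) ^ 2 * Real.exp (θ * y) ≤ θ ^ 2 * (y ^ 2 * Real.exp (θ₀ / 2 * y)) := by
        have := mul_le_mul_of_nonneg_left h2 (sq_nonneg (θ * y))
        nlinarith [sq_nonneg θ, sq_nonneg y, Real.exp_pos (θ₀ / 2 * y)]
      refine this.trans ?_
      have h7 : y ^ 2 * Real.exp (θ₀ / 2 * y) ≤ 16 / θ₀ ^ 2 * Real.exp (θ₀ * y) := by
        calc y ^ 2 * Real.exp (θ₀ / 2 * y)
            ≤ 16 / θ₀ ^ 2 * Real.exp (θ₀ / 2 * y) * Real.exp (θ₀ / 2 * y) :=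
              mul_le_mul_of_nonneg_right h3 (Real.exp_pos _).le
          _ = 16 / θ₀ ^ 2 * Real.exp (θ₀ * y) := by rw [mul_assoc, h6]
      exact mul_le_mul_of_nonneg_left h7 (sq_nonneg θ)
    rw [hmax]
    nlinarith
  · have hmax : max (-y) 0 = -y := max_eq_left (by linarith)
    have h1 : Real.exp (θ * y) ≤ 1 + θ * y + (θ * y) ^ 2 :=
      aux_exp_nonpos (by nlinarith)
    have h2 : (0:ℝ) ≤ 16 / θ₀ ^ 2 * Real.exp (θ₀ * y) := by positivity
    rw [hmax]
    nlinarith [sq_nonneg θ]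

lemma aux_mgf_bound (π : Measure ℝ) [IsProbabilityMeasure π]
    {θ₀ M V θ : ℝ} (hθ₀ : 0 < θ₀)
    (hint : Integrable (fun y : ℝ => y) π) (hmean : ∫ y, y ∂π = 0)
    (hmgfInt : Integrable (fun y : ℝ => Real.exp (θ₀ * y)) π)
    (hmgf : ∫ y, Real.exp (θ₀ * y) ∂π ≤ M)
    (hnegInt : Integrable (fun y : ℝ => (max (-y) 0) ^ 2) π)
    (hneg : ∫ y, (max (-y) 0) ^ 2 ∂π ≤ V)
    (hθ : 0 ≤ θ) (hθ' : θ ≤ θ₀ / 2) :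
    Integrable (fun y : ℝ => Real.exp (θ * y)) π ∧
    ∫ y, Real.exp (θ * y) ∂π ≤ 1 + θ ^ 2 * (16 / θ₀ ^ 2 * M + V) := by
  have hmeas : Measurable fun y : ℝ => Real.exp (θ * y) :=
    (measurable_id.const_mul θ).exp
  have hIntL : Integrable (fun y : ℝ => Real.exp (θ * y)) π := by
    refine ((integrable_const (1:ℝ)).add hmgfInt).mono hmeas.aestronglyMeasurable ?_
    filter_upwards with y
    rw [Real.norm_eq_abs, abs_of_pos (Real.exp_pos _)]
    rcases le_or_gt 0 y with hy | hy
    · have : Real.exp (θ * y) ≤ Real.exp (θ₀ * y) := Real.exp_le_exp.2 (by nlinarith)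
      have h2 : (0:ℝ) ≤ 1 := zero_le_one
      calc Real.exp (θ * y) ≤ Real.exp (θ₀ * y) := this
        _ ≤ |1 + Real.exp (θ₀ * y)| := by
            rw [abs_of_pos (by positivity)]; linarith
    · have : Real.exp (θ * y) ≤ 1 := Real.exp_le_one_iff.2 (by nlinarith)
      calc Real.exp (θ * y) ≤ 1 := this
        _ ≤ |1 + Real.exp (θ₀ * y)| := by
            rw [abs_of_pos (by positivity)]; nlinarith [Real.exp_pos (θ₀ * y)]
  refine ⟨hIntL, ?_⟩
  have i2 : Integrable (fun y : ℝ =>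
      θ ^ 2 * (16 / θ₀ ^ 2 * Real.exp (θ₀ * y) + (max (-y) 0) ^ 2)) π := by
    exact ((hmgfInt.const_mul _).add hnegInt).const_mul _
  have i1 : Integrable (fun y : ℝ => 1 + θ * y) π := by
    exact (integrable_const (1:ℝ)).add (hint.const_mul θ)
  have i3 : Integrable (fun y : ℝ => 16 / θ₀ ^ 2 * Real.exp (θ₀ * y)) π :=
    hmgfInt.const_mul _
  have hIntR : Integrable (fun y : ℝ =>
      1 + θ * y + θ ^ 2 * (16 / θ₀ ^ 2 * Real.exp (θ₀ * y) + (max (-y) 0) ^ 2)) π :=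
    i1.add i2
  have hle : ∫ y, Real.exp (θ * y) ∂π ≤ ∫ y,
      (1 + θ * y + θ ^ 2 * (16 / θ₀ ^ 2 * Real.exp (θ₀ * y) + (max (-y) 0) ^ 2)) ∂π :=
    integral_mono hIntL hIntR (fun y => aux_pointwise hθ₀ hθ hθ' y)
  refine hle.trans ?_
  rw [integral_add i1 i2, integral_add (integrable_const (1:ℝ)) (hint.const_mul θ),
    integral_const, integral_const_mul, integral_const_mul,
    integral_add i3 hnegInt, integral_const_mul, hmean]
  simp only [probReal_univ, measure_univ, ENNReal.toReal_one, smul_eq_mul, one_mul, mul_zero, add_zero]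
  have h1 : 16 / θ₀ ^ 2 * ∫ y, Real.exp (θ₀ * y) ∂π + ∫ y, (max (-y) 0) ^ 2 ∂π
      ≤ 16 / θ₀ ^ 2 * M + V := by
    have : (0:ℝ) ≤ 16 / θ₀ ^ 2 := by positivity
    nlinarith
  nlinarith [sq_nonneg θ]

/-- Uniform Chernoff–Cramér upper bound: for a family `𝕏` of mean-zero laws with a
uniform exponential moment bound and a uniform second moment bound on the negative
part, there is `C > 0` such that for all small `x > 0`, all `m ≥ 1` and independent
random variables whose laws belong to `𝕏`,
`P((1/m) ∑ X_i > x) ≤ exp(-C x² m)`. -/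
theorem uniform_chernoff_cramer (𝕏 : Set (Measure ℝ)) (θ₀ M V : ℝ) (hθ₀ : 0 < θ₀)
    (hprob : ∀ π ∈ 𝕏, IsProbabilityMeasure π)
    (hint : ∀ π ∈ 𝕏, Integrable (fun y : ℝ => y) π)
    (hmean : ∀ π ∈ 𝕏, ∫ y, y ∂π = 0)
    (hmgfInt : ∀ π ∈ 𝕏, Integrable (fun y : ℝ => Real.exp (θ₀ * y)) π)
    (hmgf : ∀ π ∈ 𝕏, ∫ y, Real.exp (θ₀ * y) ∂π ≤ M)
    (hnegInt : ∀ π ∈ 𝕏, Integrable (fun y : ℝ => (max (-y) 0) ^ 2) π)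
    (hneg : ∀ π ∈ 𝕏, ∫ y, (max (-y) 0) ^ 2 ∂π ≤ V) :
    ∃ C > (0 : ℝ), ∃ x₀ > (0 : ℝ), ∀ x : ℝ, 0 < x → x < x₀ →
      ∀ m : ℕ, 1 ≤ m →
      ∀ (Ω : Type) (mΩ : MeasurableSpace Ω) (μ : Measure Ω),
        IsProbabilityMeasure μ →
        ∀ X : Fin m → Ω → ℝ, (∀ i, Measurable (X i)) →
          iIndepFun X μ →
          (∀ i, Measure.map (X i) μ ∈ 𝕏) →
          μ {ω | x < (∑ i, X i ω) / m} ≤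
            ENNReal.ofReal (Real.exp (-(C * x ^ 2 * m))) := by
  set K : ℝ := max (16 / θ₀ ^ 2 * M + V) 1 with hKdef
  have hK1 : (1:ℝ) ≤ K := le_max_right _ _
  have hKpos : (0:ℝ) < K := lt_of_lt_of_le one_pos hK1
  refine ⟨1 / (4 * K), by positivity, K * θ₀, by positivity, ?_⟩
  intro x hx hxx m hm Ω mΩ μ hμ X hXmeas hindep hXlaw
  haveI := hμ
  set θ : ℝ := x / (2 * K) with hθdef
  have hθpos : 0 < θ := by positivity
  have hθle : θ ≤ θ₀ / 2 := by
    rw [hθdef, div_le_div_iff₀ (by positivity) (by norm_num)]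
    nlinarith
  have hbd : ∀ i : Fin m, Integrable (fun ω => Real.exp (θ * X i ω)) μ ∧
      mgf (X i) μ θ ≤ Real.exp (K * θ ^ 2) := by
    intro i
    have hπ := hXlaw i
    haveI := hprob _ hπ
    obtain ⟨hInt, hIntLe⟩ := aux_mgf_bound (Measure.map (X i) μ) hθ₀ (hint _ hπ) (hmean _ hπ)
      (hmgfInt _ hπ) (hmgf _ hπ) (hnegInt _ hπ) (hneg _ hπ) hθpos.le hθle
    have hmeas : Measurable fun y : ℝ => Real.exp (θ * y) := (measurable_id.const_mul θ).exp
    have hInt' : Integrable (fun ω => Real.exp (θ * X i ω)) μ :=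
      (integrable_map_measure hmeas.aestronglyMeasurable (hXmeas i).aemeasurable).mp hInt
    refine ⟨hInt', ?_⟩
    have hmgfeq : mgf (X i) μ θ = ∫ y, Real.exp (θ * y) ∂(Measure.map (X i) μ) := by
      rw [mgf, integral_map (hXmeas i).aemeasurable hmeas.aestronglyMeasurable]
    rw [hmgfeq]
    refine hIntLe.trans ?_
    have h1 : 16 / θ₀ ^ 2 * M + V ≤ K := le_max_left _ _
    have h2 : 1 + θ ^ 2 * (16 / θ₀ ^ 2 * M + V) ≤ 1 + K * θ ^ 2 := by nlinarith [sq_nonneg θ]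
    refine h2.trans ?_
    linarith [Real.add_one_le_exp (K * θ ^ 2)]
  have hIntSum : Integrable (fun ω => Real.exp (θ * (∑ i, X i) ω)) μ :=
    hindep.integrable_exp_mul_sum hXmeas (fun i _ => (hbd i).1)
  have hch := measure_ge_le_exp_mul_mgf (μ := μ) (X := ∑ i, X i) ((m : ℝ) * x) hθpos.le hIntSum
  have hmgfsum : mgf (∑ i, X i) μ θ ≤ Real.exp (K * θ ^ 2 * m) := by
    rw [hindep.mgf_sum hXmeas]
    calc ∏ i : Fin m, mgf (X i) μ θ ≤ ∏ _i : Fin m, Real.exp (K * θ ^ 2) :=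
        Finset.prod_le_prod (fun i _ => mgf_nonneg) (fun i _ => (hbd i).2)
      _ = Real.exp (K * θ ^ 2 * m) := by
        rw [Finset.prod_const, Finset.card_univ, Fintype.card_fin, ← Real.exp_nat_mul]
        ring_nf
  have hsub : {ω | x < (∑ i, X i ω) / m} ⊆ {ω | (m : ℝ) * x ≤ (∑ i, X i) ω} := by
    intro ω hω
    simp only [Set.mem_setOf_eq] at hω ⊢
    rw [Finset.sum_apply]
    have hm0 : (0:ℝ) < m := by exact_mod_cast Nat.lt_of_lt_of_le Nat.zero_lt_one hm
    rw [lt_div_iff₀ hm0] at hω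
    linarith
  have hKne : K ≠ 0 := ne_of_gt hKpos
  calc μ {ω | x < (∑ i, X i ω) / m} ≤ μ {ω | (m : ℝ) * x ≤ (∑ i, X i) ω} := measure_mono hsub
    _ = ENNReal.ofReal (μ {ω | (m : ℝ) * x ≤ (∑ i, X i) ω}).toReal :=
        (ENNReal.ofReal_toReal (measure_ne_top _ _)).symm
    _ ≤ ENNReal.ofReal (Real.exp (-(1 / (4 * K) * x ^ 2 * m))) := by
        apply ENNReal.ofReal_le_ofReal
        refine hch.trans ?_
        calc Real.exp (-θ * ((m : ℝ) * x)) * mgf (∑ i, X i) μ θ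
            ≤ Real.exp (-θ * ((m : ℝ) * x)) * Real.exp (K * θ ^ 2 * m) :=
              mul_le_mul_of_nonneg_left hmgfsum (Real.exp_pos _).le
          _ = Real.exp (-θ * ((m : ℝ) * x) + K * θ ^ 2 * m) := (Real.exp_add _ _).symm
          _ = Real.exp (-(1 / (4 * K) * x ^ 2 * m)) := by
              congr 1
              rw [hθdef]
              field_simp
              ring
end

section
/- In the branching random walk of Example 3 (each particle produces N children, half at +1 and half at −1 relative to the parent, with N ∈ {e^{b₀}, e^{b₁}}, 2 ≤ e^{b₀} < e^{b₁}), for every b ∈ [b₀, b₁], n ≥ 1 and ζ ∈ 𝒵_n(b), one has n^{−1}⟨ζ̄, x⟩ ≤ γ(b), where γ(b₀) = 0 and γ(b) = β^{−1}((b₁ − b) ∧ log 2) for b ∈ (b₀, b₁], with β(x) = (1/2)((1+x)log(1+x)+(1−x)log(1−x)). -/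
/-- The inverse of `β : [0,1] → [0, log 2]`. -/
noncomputable def brwBetaInv (y : ℝ) : ℝ :=
  sInf {x : ℝ | x ∈ Set.Icc (0 : ℝ) 1 ∧ y ≤ brwBeta x}

/-- One-generation evolution of a configuration, offspring support `S`. -/
def NextGen (S : Set (Multiset ℝ)) (ζ : Multiset ℝ) : Set (Multiset ℝ) :=
  {ζ' | ∃ m : Multiset (ℝ × Multiset ℝ),
    m.map Prod.fst = ζ ∧ (∀ p ∈ m, p.2 ∈ S) ∧
    ζ' = (m.map (fun p => p.2.map (fun y => y + p.1))).sum}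

/-- Possible generation-`n` configurations started from a single particle at `0`. -/
def Gens (S : Set (Multiset ℝ)) : ℕ → Set (Multiset ℝ)
  | 0 => {({0} : Multiset ℝ)}
  | n + 1 => ⋃ ζ ∈ Gens S n, NextGen S ζ

lemma brw_card_sum (s : Multiset (Multiset ℝ)) :
    Multiset.card s.sum = (s.map Multiset.card).sum :=
  Multiset.induction_on s (by simp) (by intro a s ih; simp [ih])

lemma brw_sum_sum (s : Multiset (Multiset ℝ)) :
    s.sum.sum = (s.map Multiset.sum).sum :=
  Multiset.induction_on s (by simp) (by intro a s ih; simp [ih])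

lemma brw_map_sum (f : ℝ → ℝ) (s : Multiset (Multiset ℝ)) :
    s.sum.map f = (s.map (Multiset.map f)).sum :=
  Multiset.induction_on s (by simp) (by intro a s ih; simp [ih])

lemma brw_sum_le {α : Type*} (s : Multiset α) (f g : α → ℝ) (h : ∀ x ∈ s, f x ≤ g x) :
    (s.map f).sum ≤ (s.map g).sum := by
  induction s using Multiset.induction_on with
  | empty => simp
  | cons a s ih =>
    simp only [Multiset.map_cons, Multiset.sum_cons]
    exact add_le_add (h a (by simp)) (ih fun x hx => h x (by simp [hx]))

def brwS (k₀ k₁ : ℕ) : Set (Multiset ℝ) :=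
  {Multiset.replicate k₀ (-1 : ℝ) + Multiset.replicate k₀ (1 : ℝ),
   Multiset.replicate k₁ (-1 : ℝ) + Multiset.replicate k₁ (1 : ℝ)}

lemma brw_mgf (k₀ k₁ : ℕ) (hk : k₀ ≤ k₁) (l : ℝ) :
    ∀ n : ℕ, ∀ ζ ∈ Gens (brwS k₀ k₁) n,
      (ζ.map (fun x => Real.exp (l * x))).sum
        ≤ (k₁ * (Real.exp l + Real.exp (-l))) ^ n := by
  intro n
  induction n with
  | zero =>
    intro ζ hζ
    simp only [Gens, Set.mem_singleton_iff] at hζ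
    subst hζ; simp
  | succ n ih =>
    intro ζ' hζ'
    simp only [Gens, Set.mem_iUnion] at hζ'
    obtain ⟨ζ, hζ, m, hm1, hm2, hm3⟩ := hζ'
    set C : ℝ := k₁ * (Real.exp l + Real.exp (-l)) with hC
    have hCpos : 0 < Real.exp l + Real.exp (-l) :=
      add_pos (Real.exp_pos _) (Real.exp_pos _)
    subst hm3
    rw [brw_map_sum, Multiset.map_map, brw_sum_sum, Multiset.map_map]
    have hterm : ∀ p ∈ m,
        (((p.2.map (fun y => y + p.1)).map (fun x => Real.exp (l * x))).sum)
          ≤ Real.exp (l * p.1) * C := by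
      intro p hp
      have hp2 := hm2 p hp
      rcases hp2 with h | h <;>
      · rw [h]
        simp only [Multiset.map_add, Multiset.map_replicate, Multiset.sum_add,
          Multiset.sum_replicate, nsmul_eq_mul]
        rw [hC]
        have e1 : Real.exp (l * (-1 + p.1)) = Real.exp (l * p.1) * Real.exp (-l) := by
          rw [← Real.exp_add]; ring_nf
        have e2 : Real.exp (l * (1 + p.1)) = Real.exp (l * p.1) * Real.exp l := by
          rw [← Real.exp_add]; ring_nf
        rw [e1, e2]
        have hep : (0:ℝ) < Real.exp (l * p.1) := Real.exp_pos _
        have hkk : (k₀:ℝ) ≤ (k₁:ℝ) := by exact_mod_cast hk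
        have hk1 : (k₀:ℝ) ≤ (k₁:ℝ) := hkk
        nlinarith [mul_le_mul_of_nonneg_left hkk (le_of_lt (mul_pos hep hCpos))]
    calc (m.map fun p =>
            (((p.2.map (fun y => y + p.1)).map (fun x => Real.exp (l * x))).sum)).sum
        ≤ (m.map fun p => Real.exp (l * p.1) * C).sum := brw_sum_le m _ _ hterm
      _ = C * (ζ.map (fun x => Real.exp (l * x))).sum := by
          rw [← hm1, Multiset.map_map]
          rw [show (fun p : ℝ × Multiset ℝ => Real.exp (l * p.1) * C)
              = (fun p : ℝ × Multiset ℝ => C * Real.exp (l * p.1)) from by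
            funext p; ring]
          rw [Multiset.sum_map_mul_left]
          rfl
      _ ≤ C * C ^ n := by
          have := ih ζ hζ
          have hC0 : 0 ≤ C := by positivity
          exact mul_le_mul_of_nonneg_left this hC0
      _ = C ^ (n + 1) := by ring

lemma brw_mem_sum {x : ℝ} {s : Multiset (Multiset ℝ)} (h : x ∈ s.sum) :
    ∃ t ∈ s, x ∈ t := by
  induction s using Multiset.induction_on with
  | empty => simp at h
  | cons a s ih =>
    rw [Multiset.sum_cons, Multiset.mem_add] at h
    rcases h with h | h
    · exact ⟨a, by simp, h⟩
    · obtain ⟨t, ht, hx⟩ := ih h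
      exact ⟨t, by simp [ht], hx⟩

lemma brw_pos_bound (k₀ k₁ : ℕ) :
    ∀ n : ℕ, ∀ ζ ∈ Gens (brwS k₀ k₁) n, ∀ x ∈ ζ, |x| ≤ (n : ℝ) := by
  intro n
  induction n with
  | zero =>
    intro ζ hζ x hx
    simp only [Gens, Set.mem_singleton_iff] at hζ
    subst hζ
    simp only [Multiset.mem_singleton] at hx
    simp [hx]
  | succ n ih =>
    intro ζ' hζ' x hx
    simp only [Gens, Set.mem_iUnion] at hζ'
    obtain ⟨ζ, hζ, m, hm1, hm2, hm3⟩ := hζ'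
    subst hm3
    obtain ⟨t, ht, hxt⟩ := brw_mem_sum hx
    rw [Multiset.mem_map] at ht
    obtain ⟨p, hp, rfl⟩ := ht
    rw [Multiset.mem_map] at hxt
    obtain ⟨y, hy, rfl⟩ := hxt
    have hy1 : |y| ≤ 1 := by
      rcases hm2 p hp with h | h <;>
      · rw [h, Multiset.mem_add] at hy
        rcases hy with h' | h' <;>
        · have := Multiset.eq_of_mem_replicate h'
          rw [this]; norm_num
    have hp1 : |p.1| ≤ (n : ℝ) := by
      apply ih ζ hζ
      rw [← hm1]
      exact Multiset.mem_map_of_mem _ hp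
    calc |y + p.1| ≤ |y| + |p.1| := abs_add_le _ _
      _ ≤ 1 + n := add_le_add hy1 hp1
      _ = ((n + 1 : ℕ) : ℝ) := by push_cast; ring

lemma brw_sum_ge_card_mul (c : ℕ) (s : Multiset ℕ) (h : ∀ x ∈ s, c ≤ x) :
    c * Multiset.card s ≤ s.sum := by
  induction s using Multiset.induction_on with
  | empty => simp
  | cons a s ih =>
    simp only [Multiset.card_cons, Multiset.sum_cons]
    have h1 := h a (by simp)
    have h2 := ih (fun x hx => h x (by simp [hx]))
    calc c * (Multiset.card s + 1) = c + c * Multiset.card s := by ring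
      _ ≤ a + s.sum := add_le_add h1 h2

lemma brw_eq_of_sum_eq (c : ℕ) (s : Multiset ℕ) (h : ∀ x ∈ s, c ≤ x)
    (heq : s.sum = c * Multiset.card s) : ∀ x ∈ s, x = c := by
  induction s using Multiset.induction_on with
  | empty => simp
  | cons a s ih =>
    intro x hx
    have h1 := h a (by simp)
    have h2 : ∀ y ∈ s, c ≤ y := fun y hy => h y (by simp [hy])
    have h3 := brw_sum_ge_card_mul c s h2
    simp only [Multiset.card_cons, Multiset.sum_cons, Nat.mul_add, Nat.mul_one] at heq
    have ha : a = c := by omega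
    have hs : s.sum = c * Multiset.card s := by omega
    rcases Multiset.mem_cons.mp hx with rfl | hx
    · exact ha
    · exact ih h2 hs x hx

lemma brw_card_rigid (k₀ k₁ : ℕ) (hk₀ : 1 ≤ k₀) (hk : k₀ < k₁) :
    ∀ n : ℕ, ∀ ζ ∈ Gens (brwS k₀ k₁) n,
      (2 * k₀) ^ n ≤ Multiset.card ζ ∧
      (Multiset.card ζ = (2 * k₀) ^ n → ζ.sum = 0) := by
  intro n
  induction n with
  | zero =>
    intro ζ hζ
    simp only [Gens, Set.mem_singleton_iff] at hζ
    subst hζ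
    simp
  | succ n ih =>
    intro ζ' hζ'
    simp only [Gens, Set.mem_iUnion] at hζ'
    obtain ⟨ζ, hζ, m, hm1, hm2, hm3⟩ := hζ'
    subst hm3
    have hcards : ∀ p ∈ m, 2 * k₀ ≤ Multiset.card p.2 := by
      intro p hp
      rcases hm2 p hp with h | h <;>
      · rw [h]
        simp only [Multiset.card_add, Multiset.card_replicate]
        omega
    have hcardζ : Multiset.card ζ = Multiset.card m := by
      rw [← hm1]; simp
    have hIH := ih ζ hζ
    have hcard' : Multiset.card ((m.map fun p => p.2.map (fun y => y + p.1)).sum)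
        = (m.map fun p => Multiset.card p.2).sum := by
      rw [brw_card_sum, Multiset.map_map]
      simp [Function.comp_def]
    have hmemc : ∀ x ∈ m.map fun p => Multiset.card p.2, 2 * k₀ ≤ x := by
      intro x hx
      rw [Multiset.mem_map] at hx
      obtain ⟨p, hp, rfl⟩ := hx
      exact hcards p hp
    have hlow : 2 * k₀ * Multiset.card m ≤ (m.map fun p => Multiset.card p.2).sum := by
      have := brw_sum_ge_card_mul (2 * k₀) (m.map fun p => Multiset.card p.2) hmemc
      simpa using this
    constructor
    · rw [hcard']
      calc (2 * k₀) ^ (n + 1) = 2 * k₀ * (2 * k₀) ^ n := by ring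
        _ ≤ 2 * k₀ * Multiset.card ζ :=
            Nat.mul_le_mul_left _ hIH.1
        _ = 2 * k₀ * Multiset.card m := by rw [hcardζ]
        _ ≤ _ := hlow
    · intro hceq
      rw [hcard'] at hceq
      -- card ζ = (2k₀)^n
      have hle : Multiset.card m ≤ (2 * k₀) ^ n := by
        have h1 : 2 * k₀ * Multiset.card m ≤ 2 * k₀ * (2 * k₀) ^ n := by
          calc 2 * k₀ * Multiset.card m ≤ (2 * k₀) ^ (n + 1) := hceq ▸ hlow
            _ = 2 * k₀ * (2 * k₀) ^ n := by rw [pow_succ]; ring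
        exact Nat.le_of_mul_le_mul_left h1 (by omega)
      have hcm : Multiset.card m = (2 * k₀) ^ n := le_antisymm hle (hcardζ ▸ hIH.1)
      have hsumζ : ζ.sum = 0 := hIH.2 (by rw [hcardζ, hcm])
      have hall : ∀ p ∈ m, Multiset.card p.2 = 2 * k₀ := by
        intro p hp
        exact brw_eq_of_sum_eq (2 * k₀) _ hmemc
          (by rw [hceq, Multiset.card_map, hcm]; ring) _ (Multiset.mem_map_of_mem _ hp)
      -- each family sums appropriately
      have hsums : ∀ p ∈ m, (p.2.map (fun y => y + p.1)).sum = (2 * k₀ : ℝ) * p.1 := by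
        intro p hp
        have hc2 : p.2 = Multiset.replicate k₀ (-1 : ℝ) + Multiset.replicate k₀ (1 : ℝ) := by
          rcases hm2 p hp with h | h
          · exact h
          · exfalso
            have := hall p hp
            rw [h] at this
            simp only [Multiset.card_add, Multiset.card_replicate] at this
            omega
        rw [hc2]
        simp only [Multiset.map_add, Multiset.map_replicate, Multiset.sum_add,
          Multiset.sum_replicate, nsmul_eq_mul]
        push_cast
        ring
      rw [brw_sum_sum, Multiset.map_map]
      have hmapeq : (m.map fun p => ((p.2.map (fun y => y + p.1)).sum))
          = (m.map fun p => (2 * k₀ : ℝ) * p.1) := Multiset.map_congr rfl hsums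
      rw [show (Multiset.map (Multiset.sum ∘ fun p : ℝ × Multiset ℝ =>
            Multiset.map (fun y => y + p.1) p.2) m)
          = m.map fun p => ((p.2.map (fun y => y + p.1)).sum) from rfl, hmapeq]
      rw [Multiset.sum_map_mul_left]
      have : (m.map fun p : ℝ × Multiset ℝ => p.1).sum = ζ.sum := by rw [← hm1]
      rw [this, hsumζ, mul_zero]

lemma brw_sum_map_add_const (a : ℝ) (t : Multiset ℝ) :
    (t.map (fun x => a + x)).sum = (Multiset.card t : ℝ) * a + t.sum := by
  induction t using Multiset.induction_on with
  | empty => simp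
  | cons b t ih => simp only [Multiset.map_cons, Multiset.sum_cons, Multiset.card_cons, ih]
                   push_cast; ring

lemma brw_jensen (t : Multiset ℝ) (ht : t ≠ 0) :
    (Multiset.card t : ℝ) * Real.exp (t.sum / Multiset.card t) ≤ (t.map Real.exp).sum := by
  set c : ℝ := (Multiset.card t : ℝ) with hc
  have hc0 : 0 < c := by
    rw [hc]
    exact_mod_cast Multiset.card_pos.mpr ht
  set μ : ℝ := t.sum / c with hμ
  have key : ∀ x ∈ t, Real.exp μ * (1 + (x - μ)) ≤ Real.exp x := by
    intro x _
    have h1 : 1 + (x - μ) ≤ Real.exp (x - μ) := by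
      linarith [Real.add_one_le_exp (x - μ)]
    calc Real.exp μ * (1 + (x - μ)) ≤ Real.exp μ * Real.exp (x - μ) :=
          mul_le_mul_of_nonneg_left h1 (Real.exp_pos _).le
      _ = Real.exp x := by rw [← Real.exp_add]; ring_nf
  have h2 := brw_sum_le t _ _ key
  have h3 : (t.map (fun x => Real.exp μ * (1 + (x - μ)))).sum = c * Real.exp μ := by
    have : (fun x : ℝ => Real.exp μ * (1 + (x - μ)))
        = fun x : ℝ => Real.exp μ * ((1 - μ) + x) := by funext x; ring
    rw [this, Multiset.sum_map_mul_left, brw_sum_map_add_const]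
    have hsum : t.sum = c * μ := by
      rw [hμ, mul_div_assoc', mul_div_right_comm, div_self hc0.ne', one_mul]
    rw [← hc, hsum]
    ring
  rw [h3] at h2
  linarith [h2]

lemma brw_tlogt (t : ℝ) (ht : 0 < t) : t - 1 ≤ t * Real.log t := by
  have h := Real.log_le_sub_one_of_pos (show (0:ℝ) < t⁻¹ by positivity)
  rw [Real.log_inv] at h
  have := mul_le_mul_of_nonneg_left h ht.le
  have ht' : t * t⁻¹ = 1 := mul_inv_cancel₀ ht.ne'
  nlinarith

lemma brw_beta_nonneg (x : ℝ) (h0 : 0 ≤ x) (h1 : x < 1) : 0 ≤ brwBeta x := by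
  have ha : (1 + x) - 1 ≤ (1 + x) * Real.log (1 + x) := brw_tlogt _ (by linarith)
  have hb : (1 - x) - 1 ≤ (1 - x) * Real.log (1 - x) := brw_tlogt _ (by linarith)
  rw [brwBeta]
  linarith

/-- `l = artanh x` achieves the Legendre supremum. -/
lemma brw_artanh (x : ℝ) (h0 : 0 < x) (h1 : x < 1) :
    ∃ l : ℝ, 0 < l ∧
      l * x - Real.log ((Real.exp l + Real.exp (-l)) / 2) = brwBeta x := by
  set u : ℝ := Real.sqrt ((1 + x) / (1 - x)) with hu
  have hrpos : 0 < (1 + x) / (1 - x) := by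
    apply div_pos <;> linarith
  have hupos : 0 < u := Real.sqrt_pos.mpr hrpos
  have hu2 : u ^ 2 = (1 + x) / (1 - x) := Real.sq_sqrt hrpos.le
  refine ⟨Real.log u, ?_, ?_⟩
  · apply Real.log_pos
    have : (1:ℝ) < (1 + x) / (1 - x) := by
      rw [lt_div_iff₀ (by linarith)]
      linarith
    nlinarith [Real.sq_sqrt hrpos.le, Real.sqrt_nonneg ((1 + x) / (1 - x))]
  · have helog : Real.exp (Real.log u) = u := Real.exp_log hupos
    have henlog : Real.exp (-Real.log u) = u⁻¹ := by
      rw [Real.exp_neg, helog]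
    rw [helog, henlog]
    have hsum : (u + u⁻¹) / 2 = ((1 - x) * u)⁻¹ := by
      have h1x : (1 - x) ≠ 0 := by linarith
      have h5 : (1 - x) * (u * u) = 1 + x := by
        rw [← sq, hu2]
        field_simp
      field_simp
      linear_combination h5
    rw [hsum, Real.log_inv]
    have hlogu : Real.log u = (1 / 2) * (Real.log (1 + x) - Real.log (1 - x)) := by
      rw [hu, Real.log_sqrt hrpos.le, Real.log_div (by linarith) (by linarith)]
      ring
    rw [Real.log_mul (by linarith) hupos.ne', hlogu, brwBeta]
    ring

lemma brw_le_log_two (l α : ℝ) (hl : 0 ≤ l) (hα : α ≤ 1) :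
    l * α - Real.log ((Real.exp l + Real.exp (-l)) / 2) ≤ Real.log 2 := by
  have h1 : Real.exp l / 2 ≤ (Real.exp l + Real.exp (-l)) / 2 := by
    linarith [Real.exp_pos (-l)]
  have h2 : Real.log (Real.exp l / 2) ≤ Real.log ((Real.exp l + Real.exp (-l)) / 2) :=
    Real.log_le_log (by positivity) h1
  rw [Real.log_div (Real.exp_ne_zero l) (by norm_num), Real.log_exp] at h2
  have h3 : l * α ≤ l := by nlinarith
  linarith

lemma brw_analytic (α y : ℝ) (hα : α ≤ 1)
    (h : ∀ l : ℝ, 0 ≤ l → l * α - Real.log ((Real.exp l + Real.exp (-l)) / 2) ≤ y) :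
    α ≤ brwBetaInv (min y (Real.log 2)) := by
  have hβ1 : brwBeta 1 = Real.log 2 := by
    rw [brwBeta]
    norm_num
    ring
  have hmem : (1:ℝ) ∈ {x : ℝ | x ∈ Set.Icc (0:ℝ) 1 ∧ min y (Real.log 2) ≤ brwBeta x} := by
    refine ⟨⟨by norm_num, by norm_num⟩, ?_⟩
    rw [hβ1]
    exact min_le_right _ _
  rw [brwBetaInv]
  apply le_csInf ⟨1, hmem⟩
  rintro x ⟨⟨hx0, hx1⟩, hxy⟩
  by_contra hc
  push_neg at hc
  have hxlt1 : x < 1 := lt_of_lt_of_le hc hα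
  have key : ∃ l : ℝ, 0 ≤ l ∧
      brwBeta x < l * α - Real.log ((Real.exp l + Real.exp (-l)) / 2) := by
    rcases lt_or_eq_of_le hx0 with hx0' | hx0'
    · obtain ⟨l, hl, heq⟩ := brw_artanh x hx0' hxlt1
      refine ⟨l, hl.le, ?_⟩
      have : l * α - Real.log ((Real.exp l + Real.exp (-l)) / 2)
          = l * (α - x) + brwBeta x := by rw [← heq]; ring
      rw [this]
      nlinarith
    · -- x = 0
      have hx : x = 0 := hx0'.symm
      have hα2 : 0 < α / 2 := by rw [hx] at hc; linarith
      have hα2' : α / 2 < 1 := by linarith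
      obtain ⟨l, hl, heq⟩ := brw_artanh (α / 2) hα2 hα2'
      refine ⟨l, hl.le, ?_⟩
      have hbx : brwBeta x = 0 := by rw [hx, brwBeta]; norm_num
      have hbnn : 0 ≤ brwBeta (α / 2) := brw_beta_nonneg _ hα2.le hα2'
      have : l * α - Real.log ((Real.exp l + Real.exp (-l)) / 2)
          = l * (α - α / 2) + brwBeta (α / 2) := by rw [← heq]; ring
      rw [this, hbx]
      nlinarith
  obtain ⟨l, hl0, hlt⟩ := key
  have h1 := h l hl0
  have h2 := brw_le_log_two l α hl0 hα
  have h3 : l * α - Real.log ((Real.exp l + Real.exp (-l)) / 2) ≤ min y (Real.log 2) :=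
    le_min h1 h2
  exact absurd (lt_of_le_of_lt hxy hlt) (not_lt.mpr h3)

/-- Example 3 of the paper: every particle produces `N ∈ {2k₀, 2k₁}` children, half
at `+1` and half at `-1` relative to the parent. For `b ∈ [b₀, b₁]` with
`b₀ = log(2k₀)`, `b₁ = log(2k₁)`, every `ζ ∈ 𝒵_n(b)` satisfies
`n⁻¹ ⟨ζ̄, x⟩ ≤ γ(b)` where `γ(b₀) = 0` and `γ(b) = β⁻¹((b₁ - b) ∧ log 2)` for
`b ∈ (b₀, b₁]`. -/
theorem example3_average_height_upper_bound (k₀ k₁ : ℕ) (hk₀ : 1 ≤ k₀) (hk : k₀ < k₁) :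
    ∀ b : ℝ, b ∈ Set.Icc (Real.log (2 * k₀)) (Real.log (2 * k₁)) →
    ∀ n : ℕ, 1 ≤ n →
    ∀ ζ ∈ Gens ({Multiset.replicate k₀ (-1 : ℝ) + Multiset.replicate k₀ (1 : ℝ),
                  Multiset.replicate k₁ (-1 : ℝ) + Multiset.replicate k₁ (1 : ℝ)} :
                Set (Multiset ℝ)) n,
      (Multiset.card ζ : ℝ) = Real.exp (b * n) →
      ζ.sum / (Multiset.card ζ : ℝ) ≤
        (if b = Real.log (2 * k₀) then 0
         else brwBetaInv (min (Real.log (2 * k₁) - b) (Real.log 2))) * n := by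
  intro b hb n hn ζ hζ hcard
  have hζ' : ζ ∈ Gens (brwS k₀ k₁) n := hζ
  have hnR : (0:ℝ) < n := by exact_mod_cast hn
  have hrig := brw_card_rigid k₀ k₁ hk₀ hk n ζ hζ'
  have hcpos : 0 < Multiset.card ζ :=
    lt_of_lt_of_le (Nat.pow_pos (by omega)) hrig.1
  set c : ℝ := (Multiset.card ζ : ℝ) with hcdef
  have hc0 : (0:ℝ) < c := by rw [hcdef]; exact_mod_cast hcpos
  by_cases hbb : b = Real.log (2 * k₀)
  · rw [if_pos hbb]
    have h2k : (0:ℝ) < 2 * (k₀:ℝ) := by positivity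
    have hcn : c = ((2 * k₀ : ℕ) ^ n : ℕ) := by
      rw [hcard, hbb, mul_comm, Real.exp_nat_mul, Real.exp_log (by push_cast; positivity)]
      push_cast
      ring
    have hcard2 : Multiset.card ζ = (2 * k₀) ^ n := by
      have h := hcn
      rw [hcdef] at h
      exact_mod_cast h
    rw [hrig.2 hcard2, zero_div, zero_mul]
  · rw [if_neg hbb]
    set b₁ : ℝ := Real.log (2 * k₁) with hb₁
    set α : ℝ := ζ.sum / c / n with hα
    have hζne : ζ ≠ 0 := by
      intro h
      rw [h] at hcpos
      simp at hcpos
    have hS_le : ζ.sum ≤ c * n := by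
      have h1 : ∀ x ∈ ζ, id x ≤ (fun _ : ℝ => (n : ℝ)) x := by
        intro x hx
        have := brw_pos_bound k₀ k₁ n ζ hζ' x hx
        calc id x ≤ |x| := le_abs_self x
          _ ≤ n := this
      have h2 := brw_sum_le ζ _ _ h1
      rw [Multiset.map_id] at h2
      have h3 : (ζ.map (fun _ : ℝ => (n:ℝ))).sum = c * n := by
        rw [Multiset.map_const', Multiset.sum_replicate, nsmul_eq_mul]
      rw [h3] at h2
      exact h2
    have hα1 : α ≤ 1 := by
      rw [hα, div_le_one hnR, div_le_iff₀ hc0]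
      linarith [hS_le]
    have hαn : α * n = ζ.sum / c := by
      rw [hα]
      field_simp
    have hk₁R : (0:ℝ) < (k₁:ℝ) := by
      have : 0 < k₁ := by omega
      exact_mod_cast this
    have hmain : ∀ l : ℝ, 0 ≤ l →
        l * α - Real.log ((Real.exp l + Real.exp (-l)) / 2) ≤ b₁ - b := by
      intro l _
      have hepos : (0:ℝ) < Real.exp l + Real.exp (-l) :=
        add_pos (Real.exp_pos _) (Real.exp_pos _)
      have hCpos : (0:ℝ) < (k₁:ℝ) * (Real.exp l + Real.exp (-l)) := by positivity
      -- Jensen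
      have hjen := brw_jensen (ζ.map (fun x => l * x))
        (by simpa [Multiset.map_eq_zero] using hζne)
      rw [Multiset.card_map, Multiset.map_map] at hjen
      have hsum1 : (ζ.map (fun x => l * x)).sum = l * ζ.sum := by
        have := Multiset.sum_map_mul_left (s := ζ) (a := l) (f := id)
        simpa using this
      rw [hsum1] at hjen
      have hmgf := brw_mgf k₀ k₁ hk.le l n ζ hζ'
      have hcomp : (ζ.map (Real.exp ∘ fun x => l * x)).sum
          = (ζ.map (fun x => Real.exp (l * x))).sum := rfl
      rw [hcomp] at hjen
      have hchain : c * Real.exp (l * ζ.sum / c)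
          ≤ ((k₁:ℝ) * (Real.exp l + Real.exp (-l))) ^ n := le_trans hjen hmgf
      have hlog := Real.log_le_log (by positivity) hchain
      rw [Real.log_mul hc0.ne' (Real.exp_ne_zero _), Real.log_exp, Real.log_pow,
        Real.log_mul hk₁R.ne' hepos.ne'] at hlog
      have hlogc : Real.log c = b * n := by
        rw [hcard, Real.log_exp]
      have hb₁eq : b₁ = Real.log 2 + Real.log k₁ := by
        rw [hb₁, Real.log_mul (by norm_num) hk₁R.ne']
      have hlogdiv : Real.log ((Real.exp l + Real.exp (-l)) / 2)
          = Real.log (Real.exp l + Real.exp (-l)) - Real.log 2 :=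
        Real.log_div hepos.ne' (by norm_num)
      have hlsc : l * ζ.sum / c = l * α * n := by
        rw [mul_assoc, hαn]
        ring
      rw [hlogc, hlsc] at hlog
      -- hlog : b * n + l * α * n ≤ n * (log k₁ + log (e^l + e^-l))
      have hn' : (n:ℝ) * (l * α) ≤ (n:ℝ) *
          (Real.log k₁ + Real.log (Real.exp l + Real.exp (-l)) - b) := by
        nlinarith [hlog]
      have := le_of_mul_le_mul_left hn' hnR
      rw [hlogdiv, hb₁eq]
      linarith
    have hfin := brw_analytic α (b₁ - b) hα1 hmain
    calc ζ.sum / c = α * n := hαn.symm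
      _ ≤ brwBetaInv (min (b₁ - b) (Real.log 2)) * n :=
        mul_le_mul_of_nonneg_right hfin hnR.le
end
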